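/- arXiv:1407.2485 — 6 statements merged into one kernel-verified Lean document; each statement's English description precedes it below -/
import Mathlib

section
/- Let 𝕌 be a subfield of ℝ and let P = (p_ij) be an n×n positive stochastic matrix with entries in 𝕌 and left Perron eigenvector l = (l_1, …, l_n). If for all i, j ∈ {1, …, n} one has Σ_{k=1}^n (l_i/l_k) p_ik < 1 + n (l_i/l_j) p_ij, then P is similar over 𝕌 to a positive doubly stochastic matrix Q and is strong shift equivalent over 𝕌₊ to Q through a chain consisting entirely of n×n matrices. -/
open Matrix BigOperators

/-- Elementary strong shift equivalence between `n × n` real matrices, with all entries of the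
connecting matrices lying in the set `S ⊆ ℝ`. -/
def ESSEn (S : Set ℝ) {n : ℕ} (A B : Matrix (Fin n) (Fin n) ℝ) : Prop :=
  ∃ U V : Matrix (Fin n) (Fin n) ℝ,
    (∀ i j, U i j ∈ S) ∧ (∀ i j, V i j ∈ S) ∧ A = U * V ∧ B = V * U

/-- Strong shift equivalence through matrices of the same size `n`: a finite chain of
elementary strong shift equivalences, all between `n × n` matrices. -/
def SSEn (S : Set ℝ) {n : ℕ} (A B : Matrix (Fin n) (Fin n) ℝ) : Prop :=
  Relation.ReflTransGen (ESSEn S) A B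

/-- `A` and `B` are similar via a conjugating matrix invertible over `U ⊆ ℝ`. -/
def SimilarOver (U : Set ℝ) {n : ℕ} (A B : Matrix (Fin n) (Fin n) ℝ) : Prop :=
  ∃ M : Matrix (Fin n) (Fin n) ℝ, IsUnit M ∧ (∀ i j, M i j ∈ U) ∧
    (∀ i j, M⁻¹ i j ∈ U) ∧ B = M * A * M⁻¹

namespace Stmt9Aux

variable {n : ℕ}

/-- `I + b eᵀ` -/
def Wb (b : Fin n → ℝ) : Matrix (Fin n) (Fin n) ℝ :=
  Matrix.of fun i j => (if i = j then (1:ℝ) else 0) + b i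

lemma Wb_apply (b : Fin n → ℝ) (i j) : Wb b i j = (if i = j then (1:ℝ) else 0) + b i := rfl

lemma mul_Wb (X : Matrix (Fin n) (Fin n) ℝ) (b : Fin n → ℝ) :
    X * Wb b = Matrix.of fun i j => X i j + ∑ k, X i k * b k := by
  ext i j
  simp only [Matrix.mul_apply, Wb, Matrix.of_apply, mul_add, Finset.sum_add_distrib]
  congr 1
  simp [mul_ite]

lemma Wb_mul (b : Fin n → ℝ) (X : Matrix (Fin n) (Fin n) ℝ) :
    Wb b * X = Matrix.of fun i j => X i j + b i * ∑ k, X k j := by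
  ext i j
  simp only [Matrix.mul_apply, Wb, Matrix.of_apply, add_mul, Finset.sum_add_distrib,
    Finset.mul_sum]
  congr 1
  simp [ite_mul]

lemma Wb_mul_Wb (b c : Fin n → ℝ) :
    Wb b * Wb c = Wb (fun i => b i + c i + b i * ∑ k, c k) := by
  rw [mul_Wb]
  ext i j
  simp only [Matrix.of_apply, Wb_apply, add_mul, Finset.sum_add_distrib, ite_mul, one_mul,
    zero_mul]
  rw [Finset.sum_ite_eq Finset.univ i c]
  simp only [Finset.mem_univ, if_true, ← Finset.mul_sum]
  ring

lemma Wb_zero : (Wb (0 : Fin n → ℝ)) = 1 := by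
  ext i j
  simp [Wb_apply, Matrix.one_apply]

lemma Wb_inv_right (b : Fin n → ℝ) (h : 1 + ∑ k, b k ≠ 0) :
    Wb b * Wb (fun i => -b i / (1 + ∑ k, b k)) = 1 := by
  rw [Wb_mul_Wb]
  have hv : (fun i => b i + -b i / (1 + ∑ k, b k) + b i * ∑ k, -b k / (1 + ∑ k, b k))
      = (0 : Fin n → ℝ) := by
    funext i
    rw [Pi.zero_apply]
    have hs : (∑ k, -b k / (1 + ∑ k, b k)) = (-∑ k, b k) / (1 + ∑ k, b k) := by
      rw [← Finset.sum_div, ← Finset.sum_neg_distrib]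
    rw [hs]
    field_simp
    ring
  rw [hv, Wb_zero]

lemma Wb_inv_left (b : Fin n → ℝ) (h : 1 + ∑ k, b k ≠ 0) :
    Wb (fun i => -b i / (1 + ∑ k, b k)) * Wb b = 1 := by
  rw [Wb_mul_Wb]
  have hv : (fun i => -b i / (1 + ∑ k, b k) + b i + (-b i / (1 + ∑ k, b k)) * ∑ k, b k)
      = (0 : Fin n → ℝ) := by
    funext i
    rw [Pi.zero_apply]
    field_simp
    ring
  rw [hv, Wb_zero]

lemma conj_formula (Y : Matrix (Fin n) (Fin n) ℝ) (b : Fin n → ℝ)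
    (hcol : ∀ j, ∑ i, Y i j = 1) (h : 1 + ∑ k, b k ≠ 0) :
    Wb b * Y * Wb (fun i => -b i / (1 + ∑ k, b k)) =
      Matrix.of fun i j => Y i j + (b i - ∑ k, Y i k * b k) / (1 + ∑ k, b k) := by
  rw [Wb_mul, mul_Wb]
  ext i j
  simp only [Matrix.of_apply, hcol]
  have e1 : ∑ k, (Y i k + b i * 1) * (-b k / (1 + ∑ m, b m))
      = (∑ k, Y i k * b k) * (-(1 + ∑ m, b m)⁻¹)
        + b i * ((∑ m, b m) * (-(1 + ∑ m, b m)⁻¹)) := by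
    rw [Finset.sum_congr rfl (fun k _ => by
      show (Y i k + b i * 1) * (-b k / (1 + ∑ m, b m))
        = Y i k * b k * (-(1 + ∑ m, b m)⁻¹) + b i * (b k * (-(1 + ∑ m, b m)⁻¹))
      ring)]
    rw [Finset.sum_add_distrib, ← Finset.sum_mul, ← Finset.mul_sum, ← Finset.sum_mul]
  rw [e1]
  field_simp
  ring

lemma esse_left (S : Set ℝ) (X V Vinv : Matrix (Fin n) (Fin n) ℝ) (h1 : Vinv * V = 1)
    (hU : ∀ i j, (X * Vinv) i j ∈ S) (hV : ∀ i j, V i j ∈ S) :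
    ESSEn S X (V * X * Vinv) :=
  ⟨X * Vinv, V, hU, hV, by rw [Matrix.mul_assoc, h1, Matrix.mul_one],
    (Matrix.mul_assoc V X Vinv)⟩

lemma esse_right (S : Set ℝ) (X W Winv : Matrix (Fin n) (Fin n) ℝ) (h1 : Winv * W = 1)
    (hU : ∀ i j, Winv i j ∈ S) (hV : ∀ i j, (W * X) i j ∈ S) :
    ESSEn S X (W * X * Winv) :=
  ⟨Winv, W * X, hU, hV, by rw [← Matrix.mul_assoc, h1, Matrix.one_mul], rfl⟩

lemma max_sub_max (a : ℝ) : max a 0 - max (-a) 0 = a := by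
  rcases le_total a 0 with h | h
  · rw [max_eq_right h, max_eq_left (neg_nonneg.mpr h)]; ring
  · rw [max_eq_left h, max_eq_right (neg_nonpos.mpr h)]; ring

lemma max_mem (𝕌 : Subfield ℝ) {a : ℝ} (h : a ∈ 𝕌) : max a 0 ∈ 𝕌 := by
  rcases le_total a 0 with hh | hh
  · rw [max_eq_right hh]; exact zero_mem 𝕌
  · rw [max_eq_left hh]; exact h

lemma convex_lb {a q mm s : ℝ} (h0 : 0 ≤ s) (h1 : s ≤ 1) (hma : mm ≤ a) (hmq : mm ≤ q) :
    mm ≤ (1 - s) * a + s * q := by nlinarith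

lemma convex_ub {a q Mx s : ℝ} (h0 : 0 ≤ s) (h1 : s ≤ 1) (haM : a ≤ Mx) (hqM : q ≤ Mx) :
    (1 - s) * a + s * q ≤ Mx := by nlinarith

lemma perron_uniq {n : ℕ} (P : Matrix (Fin n) (Fin n) ℝ)
    (hpos : ∀ i j, 0 < P i j)
    (l : Fin n → ℝ) (hl : ∀ i, 0 < l i) (hn : 0 < n)
    (hperron : ∀ j, ∑ i, l i * P i j = l j)
    (x : Fin n → ℝ) (hx : ∀ j, ∑ i, x i * P i j = x j) :
    ∃ t : ℝ, ∀ i, x i = t * l i := by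
  have hne : (Finset.univ : Finset (Fin n)).Nonempty := by
    simpa [Finset.univ_nonempty_iff] using Fin.pos_iff_nonempty.mp hn
  obtain ⟨i0, -, hi0⟩ := Finset.exists_mem_eq_inf' hne (fun i => x i / l i)
  set t := (Finset.univ : Finset (Fin n)).inf' hne (fun i => x i / l i) with ht
  refine ⟨t, ?_⟩
  set w := fun i => x i - t * l i with hw
  have hwnn : ∀ i, 0 ≤ w i := by
    intro i
    have : t ≤ x i / l i := Finset.inf'_le _ (Finset.mem_univ i)
    have := (le_div_iff₀ (hl i)).mp this
    simp only [hw]; linarith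
  have hwi0 : w i0 = 0 := by
    simp only [hw]
    have : x i0 = t * l i0 := by
      rw [hi0, div_mul_cancel₀ _ (ne_of_gt (hl i0))]
    linarith [this]
  have hweig : ∑ i, w i * P i i0 = w i0 := by
    simp only [hw, sub_mul, Finset.sum_sub_distrib]
    rw [hx i0]
    have : ∑ i, t * l i * P i i0 = t * l i0 := by
      rw [show (∑ i, t * l i * P i i0) = t * ∑ i, l i * P i i0 by
        rw [Finset.mul_sum]; exact Finset.sum_congr rfl fun k _ => by ring]
      rw [hperron i0]
    rw [this]
  have hzero : ∀ i, w i = 0 := by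
    intro i
    have hsum : ∑ i, w i * P i i0 = 0 := by rw [hweig, hwi0]
    have := (Finset.sum_eq_zero_iff_of_nonneg (fun i _ =>
      mul_nonneg (hwnn i) (le_of_lt (hpos i i0)))).mp hsum i (Finset.mem_univ i)
    rcases mul_eq_zero.mp this with h | h
    · exact h
    · exact absurd h (ne_of_gt (hpos i i0))
  intro i
  have := hzero i
  simp only [hw] at this
  linarith

lemma l_mem_subfield (𝕌 : Subfield ℝ) {n : ℕ}
    (P : Matrix (Fin n) (Fin n) ℝ) (hUP : ∀ i j, P i j ∈ 𝕌)
    (hpos : ∀ i j, 0 < P i j) (hrow : ∀ i, ∑ j, P i j = 1)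
    (l : Fin n → ℝ) (hl : ∀ i, 0 < l i) (hlsum : ∑ i, l i = 1)
    (hperron : ∀ j, ∑ i, l i * P i j = l j) (hn : 0 < n) :
    ∀ i, l i ∈ 𝕌 := by
  set i0 : Fin n := ⟨0, hn⟩
  set C : Matrix (Fin n) (Fin n) ℝ :=
    Matrix.of fun i j => if j = i0 then 1 else P i j - (if i = j then 1 else 0) with hC
  have hCmem : ∀ i j, C i j ∈ 𝕌 := by
    intro i j
    simp only [hC, Matrix.of_apply]
    split
    · exact one_mem 𝕌
    · split
      · exact sub_mem (hUP i j) (one_mem 𝕌)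
      · simpa using sub_mem (hUP i j) (zero_mem 𝕌)
  have hdet : C.det ≠ 0 := by
    intro h0
    obtain ⟨v, hv0, hvC⟩ := (Matrix.exists_vecMul_eq_zero_iff).mpr h0
    have hvCj : ∀ j, ∑ i, v i * C i j = 0 := by
      intro j
      have := congrFun hvC j
      simpa [Matrix.vecMul, dotProduct] using this
    have hsum0 : ∑ i, v i = 0 := by
      have := hvCj i0
      simpa [hC] using this
    have heig : ∀ j, ∑ i, v i * P i j = v j := by
      have hne : ∀ j, j ≠ i0 → ∑ i, v i * P i j = v j := by
        intro j hj
        have := hvCj j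
        simp only [hC, Matrix.of_apply, if_neg hj, mul_sub, Finset.sum_sub_distrib,
          mul_ite, mul_one, mul_zero] at this
        rw [Finset.sum_ite_eq' Finset.univ j v] at this
        simp at this
        linarith [this]
      have htot : ∑ j, ((∑ i, v i * P i j) - v j) = 0 := by
        rw [Finset.sum_sub_distrib, Finset.sum_comm]
        have : ∀ i, ∑ j, v i * P i j = v i := by
          intro i
          rw [← Finset.mul_sum, hrow i, mul_one]
        rw [Finset.sum_congr rfl fun i _ => this i]
        ring
      have h0' : ((∑ i, v i * P i i0) - v i0) = 0 := by
        rw [Finset.sum_eq_single i0 (fun j _ hj => by rw [hne j hj]; ring)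
          (fun h => absurd (Finset.mem_univ i0) h)] at htot
        exact htot
      intro j
      by_cases hj : j = i0
      · subst hj; linarith [h0']
      · exact hne j hj
    obtain ⟨t, htv⟩ := perron_uniq P hpos l hl hn hperron v heig
    have : t = 0 := by
      have : ∑ i, v i = t * ∑ i, l i := by
        rw [Finset.mul_sum]; exact Finset.sum_congr rfl fun i _ => htv i
      rw [hsum0, hlsum, mul_one] at this
      exact this.symm
    apply hv0
    funext i
    rw [htv i, this]
    simp
  set C' : Matrix (Fin n) (Fin n) 𝕌 := Matrix.of fun i j => (⟨C i j, hCmem i j⟩ : 𝕌) with hC'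
  have hmap : C'.map 𝕌.subtype = C := by
    ext i j; rfl
  have hdetmap : (𝕌.subtype (C'.det) : ℝ) = C.det := by
    rw [RingHom.map_det, RingHom.mapMatrix_apply, hmap]
  have hdet' : C'.det ≠ 0 := by
    intro h
    apply hdet
    rw [← hdetmap, h]
    simp
  have hu : IsUnit C'.det := isUnit_iff_ne_zero.mpr hdet'
  set Cinv : Matrix (Fin n) (Fin n) ℝ := (C'⁻¹).map 𝕌.subtype with hCinv
  have hCCinv : C * Cinv = 1 := by
    rw [← hmap, hCinv, ← Matrix.map_mul, Matrix.mul_nonsing_inv C' hu]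
    simp
  have hlC : ∀ j, ∑ i, l i * C i j = if j = i0 then 1 else 0 := by
    intro j
    by_cases hj : j = i0
    · simp only [hC, Matrix.of_apply, hj, if_pos rfl]
      simpa using hlsum
    · simp only [hC, Matrix.of_apply, if_neg hj, mul_sub, Finset.sum_sub_distrib, mul_ite,
        mul_one, mul_zero]
      rw [Finset.sum_ite_eq' Finset.univ j l, hperron j]
      simp [hj]
  have hkey : ∀ j, Cinv i0 j = l j := by
    intro j
    have h1 : ∑ s, (∑ i, l i * C i s) * Cinv s j = Cinv i0 j := by
      rw [Finset.sum_congr rfl (fun s _ => by rw [hlC s])]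
      simp only [ite_mul, one_mul, zero_mul]
      rw [Finset.sum_ite_eq' Finset.univ i0 (fun s => Cinv s j)]
      simp
    have h2 : ∑ s, (∑ i, l i * C i s) * Cinv s j = l j := by
      calc ∑ s, (∑ i, l i * C i s) * Cinv s j
          = ∑ s, ∑ i, l i * (C i s * Cinv s j) := by
            refine Finset.sum_congr rfl fun s _ => ?_
            rw [Finset.sum_mul]
            exact Finset.sum_congr rfl fun i _ => by ring
        _ = ∑ i, ∑ s, l i * (C i s * Cinv s j) := Finset.sum_comm
        _ = ∑ i, l i * ((C * Cinv) i j) := by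
            refine Finset.sum_congr rfl fun i _ => ?_
            rw [← Finset.mul_sum, Matrix.mul_apply]
        _ = l j := by
            rw [hCCinv]
            simp only [Matrix.one_apply, mul_ite, mul_one, mul_zero]
            rw [Finset.sum_ite_eq' Finset.univ j l]
            simp
    rw [← h1, h2]
  intro i
  rw [← hkey i]
  exact (C'⁻¹ i0 i).2

set_option maxHeartbeats 1000000 in
/-- The main chain lemma: a positive column-stochastic matrix `A` over `𝕌` is SSE over `𝕌₊`,
through `n × n` matrices, to `Q = A - (1/n) c eᵀ`, provided `Q` is positive,
`∑ c = 0` and `A u - u = c` for a vector `u` over `𝕌` with `∑ u = 0`. -/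
lemma sse_chain (𝕌 : Subfield ℝ) {n : ℕ} (hn : 0 < n)
    (A Q : Matrix (Fin n) (Fin n) ℝ) (c u : Fin n → ℝ) (B : ℝ) (hB0 : 0 < B)
    (hAU : ∀ i j, A i j ∈ 𝕌) (hApos : ∀ i j, 0 < A i j)
    (hAcol : ∀ j, ∑ i, A i j = 1)
    (hcU : ∀ i, c i ∈ 𝕌) (hcsum : ∑ i, c i = 0)
    (huU : ∀ i, u i ∈ 𝕌) (husum : ∑ i, u i = 0) (huB : ∀ i, |u i| ≤ B)
    (hAu : ∀ i, ∑ r, A i r * u r = c i + u i)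
    (hQdef : Q = Matrix.of fun i j => A i j - c i / n)
    (hQU : ∀ i j, Q i j ∈ 𝕌) (hQpos : ∀ i j, 0 < Q i j) :
    SSEn {x : ℝ | x ∈ 𝕌 ∧ 0 ≤ x} A Q := by
  have hnR : (0:ℝ) < n := by exact_mod_cast hn
  set S : Set ℝ := {x : ℝ | x ∈ 𝕌 ∧ 0 ≤ x} with hSdef
  set up : Fin n → ℝ := fun i => max (u i) 0 with hupdef
  set um : Fin n → ℝ := fun i => max (-u i) 0 with humdef
  have hupum : ∀ i, up i - um i = u i := fun i => max_sub_max (u i)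
  have hup0 : ∀ i, 0 ≤ up i := fun i => le_max_right _ _
  have hum0 : ∀ i, 0 ≤ um i := fun i => le_max_right _ _
  have hupU : ∀ i, up i ∈ 𝕌 := fun i => max_mem 𝕌 (huU i)
  have humU : ∀ i, um i ∈ 𝕌 := fun i => max_mem 𝕌 (neg_mem (huU i))
  have hupB : ∀ i, up i ≤ B := fun i =>
    max_le (le_trans (le_abs_self _) (huB i)) hB0.le
  have humB : ∀ i, um i ≤ B := fun i =>
    max_le (le_trans (neg_le_abs _) (huB i)) hB0.le
  clear_value up um
  set σm : ℝ := ∑ i, um i with hσdef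
  have hσ0 : 0 ≤ σm := Finset.sum_nonneg fun i _ => hum0 i
  have hσU : σm ∈ 𝕌 := sum_mem fun i _ => humU i
  have hσp : ∑ i, up i = σm := by
    have h1 : ∑ i, (up i - um i) = 0 := by
      rw [Finset.sum_congr rfl fun i (_ : i ∈ Finset.univ) => hupum i, husum]
    rw [Finset.sum_sub_distrib] at h1
    rw [hσdef]
    linarith
  clear_value σm
  -- min and max entries of A and Q
  have hFne : (Finset.univ : Finset (Fin n × Fin n)).Nonempty :=
    ⟨(⟨0, hn⟩, ⟨0, hn⟩), Finset.mem_univ _⟩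
  obtain ⟨pmin, -, hpmin⟩ := Finset.exists_min_image Finset.univ
    (fun p : Fin n × Fin n => min (A p.1 p.2) (Q p.1 p.2)) hFne
  set m : ℝ := min (A pmin.1 pmin.2) (Q pmin.1 pmin.2) with hmdef
  have hm0 : 0 < m := lt_min (hApos _ _) (hQpos _ _)
  have hmA : ∀ i j, m ≤ A i j := fun i j =>
    le_trans (hpmin (i, j) (Finset.mem_univ _)) (min_le_left _ _)
  have hmQ : ∀ i j, m ≤ Q i j := fun i j =>
    le_trans (hpmin (i, j) (Finset.mem_univ _)) (min_le_right _ _)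
  clear_value m
  obtain ⟨pmax, -, hpmax⟩ := Finset.exists_max_image Finset.univ
    (fun p : Fin n × Fin n => max (A p.1 p.2) (Q p.1 p.2)) hFne
  set Mx : ℝ := max (A pmax.1 pmax.2) (Q pmax.1 pmax.2) with hMxdef
  have hMxA : ∀ i j, A i j ≤ Mx := fun i j =>
    le_trans (le_max_left _ _) (hpmax (i, j) (Finset.mem_univ _))
  have hMxQ : ∀ i j, Q i j ≤ Mx := fun i j =>
    le_trans (le_max_right _ _) (hpmax (i, j) (Finset.mem_univ _))
  have hMx0 : 0 < Mx := lt_of_lt_of_le (hApos pmax.1 pmax.2) (le_max_left _ _)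
  clear_value Mx
  clear hmdef hMxdef hpmin hpmax
  -- choice of the number of steps K, with δ = 1/(nK)
  obtain ⟨K, hK0, hδσ, hδB, hmaster⟩ :
      ∃ K : ℕ, 0 < K ∧ (1/((n:ℝ)*K)) * σm ≤ 1/2 ∧ (1/((n:ℝ)*K)) * B ≤ m ∧
        2*((1/((n:ℝ)*K))*B) + 2*(1/((n:ℝ)*K))*Mx*σm ≤ m := by
    obtain ⟨K0, hK0⟩ := exists_nat_gt (2*σm + B/m + (2*B + 2*Mx*σm)/m)
    have hNK : (0:ℝ) < (n:ℝ) * (((K0 + 1 : ℕ)) : ℝ) := by positivity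
    have hn1 : (1:ℝ) ≤ (n:ℝ) := by exact_mod_cast hn
    have hKcast : (((K0 + 1 : ℕ)) : ℝ) = (K0:ℝ) + 1 := by push_cast; ring
    have hd1 : (0:ℝ) ≤ B/m := div_nonneg hB0.le hm0.le
    have hd2 : (0:ℝ) ≤ (2*B + 2*Mx*σm)/m :=
      div_nonneg (by nlinarith [mul_nonneg hMx0.le hσ0] : (0:ℝ) ≤ 2*B + 2*Mx*σm) hm0.le
    have hbig : 2*σm + B/m + (2*B + 2*Mx*σm)/m < (n:ℝ) * (((K0 + 1 : ℕ)) : ℝ) := by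
      rw [hKcast]
      nlinarith [hK0, hσ0]
    refine ⟨K0 + 1, Nat.succ_pos _, ?_, ?_, ?_⟩
    · rw [show (1/((n:ℝ)*((K0 + 1 : ℕ) : ℝ))) * σm = σm / ((n:ℝ)*((K0 + 1 : ℕ) : ℝ)) by ring,
        div_le_iff₀ hNK]
      nlinarith [hbig]
    · rw [show (1/((n:ℝ)*((K0 + 1 : ℕ) : ℝ))) * B = B / ((n:ℝ)*((K0 + 1 : ℕ) : ℝ)) by ring,
        div_le_iff₀ hNK]
      have hBm : B/m < (n:ℝ)*((K0 + 1 : ℕ) : ℝ) := by linarith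
      have := (div_lt_iff₀ hm0).mp hBm
      nlinarith
    · rw [show 2*((1/((n:ℝ)*((K0 + 1 : ℕ) : ℝ)))*B) + 2*(1/((n:ℝ)*((K0 + 1 : ℕ) : ℝ)))*Mx*σm
        = (2*B + 2*Mx*σm) / ((n:ℝ)*((K0 + 1 : ℕ) : ℝ)) by ring, div_le_iff₀ hNK]
      have hBm : (2*B + 2*Mx*σm)/m < (n:ℝ)*((K0 + 1 : ℕ) : ℝ) := by linarith
      have := (div_lt_iff₀ hm0).mp hBm
      nlinarith
  set δ : ℝ := 1 / ((n:ℝ)*K) with hδdef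
  have hδ0 : 0 < δ := by rw [hδdef]; positivity
  have hδU : δ ∈ 𝕌 := by
    rw [hδdef]; exact div_mem (one_mem 𝕌) (mul_mem (natCast_mem 𝕌 n) (natCast_mem 𝕌 K))
  have hKδ : (K:ℝ) * δ = 1/(n:ℝ) := by
    rw [hδdef]
    have : ((K:ℝ)) ≠ 0 := by positivity
    field_simp
  rw [hδdef] at hδσ hδB hmaster
  rw [← hδdef] at hδσ hδB hmaster
  clear_value δ
  have hD1 : (1:ℝ)/2 ≤ 1 - δ * σm := by linarith
  have hD1pos : (0:ℝ) < 1 - δ * σm := by linarith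
  have hD1ne : (1:ℝ) - δ * σm ≠ 0 := ne_of_gt hD1pos
  -- the interpolating family
  set Y : ℕ → Matrix (Fin n) (Fin n) ℝ :=
    fun k => Matrix.of fun i j => A i j - ((k:ℝ)*δ) * c i with hYdef
  have hY0 : Y 0 = A := by
    ext i j; simp [hYdef]
  have hYQ : Y K = Q := by
    ext i j
    rw [hQdef]
    simp only [hYdef, Matrix.of_apply]
    rw [hKδ]
    ring
  have hYcol : ∀ k j, ∑ i, Y k i j = 1 := by
    intro k j
    simp only [hYdef, Matrix.of_apply]
    rw [Finset.sum_sub_distrib, hAcol j, ← Finset.mul_sum, hcsum]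
    simp
  have hYU : ∀ k i j, Y k i j ∈ 𝕌 := fun k i j => by
    simp only [hYdef, Matrix.of_apply]
    exact sub_mem (hAU i j) (mul_mem (mul_mem (natCast_mem 𝕌 k) hδU) (hcU i))
  have hYB : ∀ k, k ≤ K → ∀ i j, m ≤ Y k i j ∧ Y k i j ≤ Mx := by
    intro k hk i j
    have hs0 : 0 ≤ (k:ℝ)/(K:ℝ) := by positivity
    have hKR : (0:ℝ) < (K:ℝ) := by exact_mod_cast hK0
    have hs1 : (k:ℝ)/(K:ℝ) ≤ 1 := by
      rw [div_le_one hKR]; exact_mod_cast hk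
    have hconv : Y k i j = (1 - (k:ℝ)/(K:ℝ)) * A i j + ((k:ℝ)/(K:ℝ)) * Q i j := by
      simp only [hYdef, Matrix.of_apply, hQdef]
      have hkδ : (k:ℝ)*δ = ((k:ℝ)/(K:ℝ)) * ((K:ℝ)*δ) := by
        field_simp
      rw [hkδ, hKδ]
      field_simp
      ring
    rw [hconv]
    exact ⟨convex_lb hs0 hs1 (hmA i j) (hmQ i j), convex_ub hs0 hs1 (hMxA i j) (hMxQ i j)⟩
  have hYu : ∀ k i, ∑ r, Y k i r * u r = c i + u i := by
    intro k i
    rw [Finset.sum_congr rfl (fun r (_ : r ∈ Finset.univ) => by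
      simp only [hYdef, Matrix.of_apply]
      show (A i r - ((k:ℝ)*δ) * c i) * u r = A i r * u r - (((k:ℝ)*δ) * c i) * u r
      ring)]
    rw [Finset.sum_sub_distrib, hAu i, ← Finset.mul_sum, husum, mul_zero, sub_zero]
  have hYsucc : ∀ k i j, Y (k+1) i j = Y k i j - δ * c i := by
    intro k i j
    simp only [hYdef, Matrix.of_apply]
    push_cast
    ring
  clear_value Y
  -- the two elementary conjugators
  set b1 : Fin n → ℝ := fun i => -(δ * um i) with hb1def
  have hb1sum : ∑ r, b1 r = -(δ * σm) := by
    simp only [hb1def, hσdef]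
    rw [Finset.sum_neg_distrib, ← Finset.mul_sum]
  have h1ne : (1:ℝ) + ∑ r, b1 r ≠ 0 := by
    rw [hb1sum]; intro h; apply hD1ne; linarith
  set b2 : Fin n → ℝ := fun i => δ * up i / (1 - δ * σm) with hb2def
  have hb2sum : ∑ r, b2 r = δ * σm / (1 - δ * σm) := by
    simp only [hb2def]
    rw [← Finset.sum_div, ← Finset.mul_sum, hσp]
  have h2eq : (1:ℝ) + ∑ r, b2 r = (1 - δ*σm)⁻¹ := by
    rw [hb2sum]; field_simp; ring
  have h2ne : (1:ℝ) + ∑ r, b2 r ≠ 0 := by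
    rw [h2eq]; exact inv_ne_zero hD1ne
  have hb2negfun : (fun i => -b2 i / (1 + ∑ r, b2 r)) = fun i => -(δ * up i) := by
    funext i
    rw [h2eq]
    simp only [hb2def]
    field_simp
  -- the intermediate matrices
  set X2 : ℕ → Matrix (Fin n) (Fin n) ℝ := fun k => Matrix.of fun i j =>
    Y k i j + (-(δ * um i) + δ * (∑ r, Y k i r * um r)) / (1 - δ * σm) with hX2def
  have hX2U : ∀ k i j, X2 k i j ∈ 𝕌 := fun k i j => by
    simp only [hX2def, Matrix.of_apply]
    exact add_mem (hYU k i j) (div_mem (add_mem (neg_mem (mul_mem hδU (humU i)))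
      (mul_mem hδU (sum_mem fun r _ => mul_mem (hYU k i r) (humU r))))
      (sub_mem (one_mem 𝕌) (mul_mem hδU hσU)))
  have hX2col : ∀ k j, ∑ i, X2 k i j = 1 := by
    intro k j
    simp only [hX2def, Matrix.of_apply]
    rw [Finset.sum_add_distrib, hYcol k j, ← Finset.sum_div, Finset.sum_add_distrib]
    have e1 : ∑ i, -(δ * um i) = -(δ * σm) := by
      rw [Finset.sum_neg_distrib, ← Finset.mul_sum, ← hσdef]
    have e2 : ∑ i, δ * (∑ r, Y k i r * um r) = δ * σm := by
      rw [← Finset.mul_sum]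
      congr 1
      rw [Finset.sum_comm]
      rw [Finset.sum_congr rfl fun r (_ : r ∈ Finset.univ) => by
        rw [← Finset.sum_mul, hYcol k r, one_mul]]
      rw [← hσdef]
    rw [e1, e2]
    simp
  have hX2bd : ∀ k, k ≤ K → ∀ i j, m - 2*(δ*B) ≤ X2 k i j ∧ X2 k i j ≤ Mx + Mx := by
    intro k hk i j
    have hYlb := (hYB k hk i j).1
    have hYub := (hYB k hk i j).2
    have hg0 : 0 ≤ ∑ r, Y k i r * um r := Finset.sum_nonneg fun r _ =>
      mul_nonneg (le_trans hm0.le (hYB k hk i r).1) (hum0 r)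
    have hgub : ∑ r, Y k i r * um r ≤ Mx * σm := by
      rw [hσdef, Finset.mul_sum]
      exact Finset.sum_le_sum fun r _ => mul_le_mul_of_nonneg_right (hYB k hk i r).2 (hum0 r)
    simp only [hX2def, Matrix.of_apply]
    constructor
    · have hnum : -(δ*B) ≤ -(δ*um i) + δ*(∑ r, Y k i r * um r) := by
        nlinarith [humB i, hδ0.le]
      have h3 : -(2*(δ*B)) ≤ (-(δ*um i) + δ*(∑ r, Y k i r * um r))/(1-δ*σm) := by
        rw [le_div_iff₀ hD1pos]
        nlinarith [mul_nonneg (mul_nonneg hδ0.le hB0.le) (by linarith : (0:ℝ) ≤ 1/2 - δ*σm)]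
      linarith
    · have hnum2 : -(δ*um i) + δ*(∑ r, Y k i r * um r) ≤ δ*(Mx*σm) := by
        nlinarith [hum0 i, hδ0.le]
      have h3 : (-(δ*um i) + δ*(∑ r, Y k i r * um r))/(1-δ*σm) ≤ Mx := by
        rw [div_le_iff₀ hD1pos]
        nlinarith [mul_nonneg hMx0.le (by linarith : (0:ℝ) ≤ 1/2 - δ*σm)]
      linarith
  clear_value X2
  -- the chain
  have chain : ∀ k : ℕ, k ≤ K → SSEn S A (Y k) := by
    intro k
    induction k with
    | zero =>
      intro _
      rw [hY0]
      exact Relation.ReflTransGen.refl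
    | succ k ih =>
      intro hk
      have hkK : k ≤ K := Nat.le_of_succ_le hk
      have prev := ih hkK
      -- step 1 : conjugate by I - δ u₋ eᵀ
      have hsb1 : ∀ i, ∑ r, Y k i r * b1 r = -(δ * ∑ r, Y k i r * um r) := by
        intro i
        simp only [hb1def]
        rw [Finset.sum_congr rfl fun r (_ : r ∈ Finset.univ) =>
          (by ring : Y k i r * -(δ * um r) = -(δ * (Y k i r * um r)))]
        rw [Finset.sum_neg_distrib, ← Finset.mul_sum]
      have hX2eq : Wb b1 * Y k * Wb (fun i => -b1 i / (1 + ∑ r, b1 r)) = X2 k := by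
        rw [conj_formula (Y k) b1 (hYcol k) h1ne]
        ext i j
        simp only [Matrix.of_apply, hX2def]
        rw [hsb1 i, hb1sum]
        simp only [hb1def]
        rw [show (1:ℝ) + -(δ*σm) = 1 - δ*σm by ring,
          show -(δ * um i) - -(δ * ∑ r, Y k i r * um r)
            = -(δ * um i) + δ * (∑ r, Y k i r * um r) by ring]
      have esse1 : ESSEn S (Y k) (X2 k) := by
        rw [← hX2eq]
        refine esse_right S (Y k) (Wb b1) _ (Wb_inv_left b1 h1ne) ?_ ?_
        · intro i j
          rw [Wb_apply]
          have he : -b1 i / (1 + ∑ r, b1 r) = δ * um i / (1 - δ * σm) := by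
            rw [hb1sum]
            simp only [hb1def]
            rw [neg_neg, show (1:ℝ) + -(δ*σm) = 1 - δ*σm by ring]
          rw [he]
          have hnn : 0 ≤ δ * um i / (1 - δ * σm) :=
            div_nonneg (mul_nonneg hδ0.le (hum0 i)) hD1pos.le
          constructor
          · refine add_mem ?_ (div_mem (mul_mem hδU (humU i))
              (sub_mem (one_mem 𝕌) (mul_mem hδU hσU)))
            split
            · exact one_mem 𝕌
            · exact zero_mem 𝕌
          · split
            · linarith
            · linarith
        · intro i j
          rw [Wb_mul]
          simp only [Matrix.of_apply]
          rw [hYcol k j]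
          constructor
          · refine add_mem (hYU k i j) (mul_mem ?_ (one_mem 𝕌))
            simp only [hb1def]
            exact neg_mem (mul_mem hδU (humU i))
          · simp only [hb1def]
            have h1 := (hYB k hkK i j).1
            nlinarith [humB i, hδ0.le, hδB, hum0 i, hB0.le]
      -- step 2 : conjugate by I + (δ/(1-δσ)) u₊ eᵀ
      have hstep2eq : Wb b2 * X2 k * Wb (fun i => -b2 i / (1 + ∑ r, b2 r)) = Y (k+1) := by
        rw [conj_formula (X2 k) b2 (hX2col k) h2ne]
        ext i j
        simp only [Matrix.of_apply]
        have hsum2 : ∑ r, X2 k i r * b2 r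
            = δ/(1-δ*σm) * (∑ r, Y k i r * up r)
              + (-(δ*um i) + δ*(∑ r, Y k i r * um r))/(1-δ*σm) * (δ/(1-δ*σm)) * σm := by
          rw [Finset.sum_congr rfl (fun r (_ : r ∈ Finset.univ) => by
            simp only [hX2def, hb2def, Matrix.of_apply]
            show (Y k i r + (-(δ*um i) + δ*(∑ r', Y k i r' * um r'))/(1-δ*σm))
                * (δ * up r/(1-δ*σm))
              = δ/(1-δ*σm) * (Y k i r * up r)
                + (-(δ*um i) + δ*(∑ r', Y k i r' * um r'))/(1-δ*σm) * (δ/(1-δ*σm)) * up r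
            ring)]
          rw [Finset.sum_add_distrib, ← Finset.mul_sum, ← Finset.mul_sum, hσp]
        have hH : ∑ r, Y k i r * up r = (∑ r, Y k i r * um r) + (c i + u i) := by
          have hgh : (∑ r, Y k i r * up r) - (∑ r, Y k i r * um r) = c i + u i := by
            rw [← Finset.sum_sub_distrib]
            rw [Finset.sum_congr rfl (fun r (_ : r ∈ Finset.univ) => by
              have h4 := hupum r
              show Y k i r * up r - Y k i r * um r = Y k i r * u r
              linear_combination (Y k i r) * h4)]
            exact hYu k i
          linarith
        have hupi : up i = u i + um i := by linarith [hupum i]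
        rw [hsum2, h2eq, hYsucc k i j, hH]
        simp only [hX2def, hb2def, Matrix.of_apply]
        rw [hupi]
        field_simp
        ring
      have esse2 : ESSEn S (X2 k) (Y (k+1)) := by
        rw [← hstep2eq]
        refine esse_left S (X2 k) (Wb b2) _ (Wb_inv_left b2 h2ne) ?_ ?_
        · intro i j
          rw [hb2negfun, mul_Wb]
          simp only [Matrix.of_apply]
          have hs : ∑ r, X2 k i r * -(δ * up r) = -(δ * ∑ r, X2 k i r * up r) := by
            rw [Finset.sum_congr rfl fun r (_ : r ∈ Finset.univ) =>
              (by ring : X2 k i r * -(δ * up r) = -(δ * (X2 k i r * up r)))]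
            rw [Finset.sum_neg_distrib, ← Finset.mul_sum]
          rw [hs]
          have hXlb : m - 2*(δ*B) ≤ X2 k i j := (hX2bd k hkK i j).1
          have hsup : ∑ r, X2 k i r * up r ≤ (Mx + Mx) * σm := by
            rw [← hσp, Finset.mul_sum]
            exact Finset.sum_le_sum fun r _ =>
              mul_le_mul_of_nonneg_right ((hX2bd k hkK i r).2) (hup0 r)
          constructor
          · exact add_mem (hX2U k i j) (neg_mem (mul_mem hδU
              (sum_mem fun r _ => mul_mem (hX2U k i r) (hupU r))))
          · nlinarith [hδ0.le, hmaster, mul_nonneg hδ0.le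
              (mul_nonneg (by linarith [hMx0.le] : (0:ℝ) ≤ Mx + Mx) hσ0)]
        · intro i j
          rw [Wb_apply]
          have hnn : 0 ≤ b2 i := by
            simp only [hb2def]
            exact div_nonneg (mul_nonneg hδ0.le (hup0 i)) hD1pos.le
          constructor
          · refine add_mem ?_ (by
              simp only [hb2def]
              exact div_mem (mul_mem hδU (hupU i)) (sub_mem (one_mem 𝕌) (mul_mem hδU hσU)))
            split
            · exact one_mem 𝕌
            · exact zero_mem 𝕌
          · split
            · linarith
            · linarith
      exact (prev.tail esse1).tail esse2
  have hchain := chain K (le_refl K)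
  rw [hYQ] at hchain
  exact hchain

end Stmt9Aux

set_option maxHeartbeats 2000000 in
open Stmt9Aux in
/-- Let `𝕌` be a subfield of `ℝ` and `P` an `n × n` positive stochastic
matrix over `𝕌` with left Perron eigenvector `l`. If `∑ₖ (lᵢ/lₖ) p_{ik} < 1 + n (lᵢ/lⱼ) p_{ij}`
for all `i, j`, then `P` is similar over `𝕌` to a positive doubly stochastic matrix `Q` and
strong shift equivalent over `𝕌₊` to `Q` through `n × n` matrices. -/
theorem stmt9 (𝕌 : Subfield ℝ) {n : ℕ}
    (P : Matrix (Fin n) (Fin n) ℝ) (hUP : ∀ i j, P i j ∈ 𝕌)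
    (hpos : ∀ i j, 0 < P i j) (hrow : ∀ i, ∑ j, P i j = 1)
    (l : Fin n → ℝ) (hl : ∀ i, 0 < l i) (hlsum : ∑ i, l i = 1)
    (hperron : ∀ j, ∑ i, l i * P i j = l j)
    (hcond : ∀ i j, ∑ k, (l i / l k) * P i k < 1 + (n : ℝ) * ((l i / l j) * P i j)) :
    ∃ Q : Matrix (Fin n) (Fin n) ℝ,
      (∀ i j, Q i j ∈ 𝕌) ∧ (∀ i j, 0 < Q i j) ∧
      (∀ i, ∑ j, Q i j = 1) ∧ (∀ j, ∑ i, Q i j = 1) ∧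
      SimilarOver (𝕌 : Set ℝ) P Q ∧
      SSEn {x : ℝ | x ∈ 𝕌 ∧ 0 ≤ x} P Q := by
  -- basic positivity facts
  rcases Nat.eq_zero_or_pos n with h0 | hn
  · exfalso; subst h0; simpa using hlsum
  have hnR : (0:ℝ) < n := by exact_mod_cast hn
  have hnR0 : (n:ℝ) ≠ 0 := ne_of_gt hnR
  have hl0 : ∀ i, l i ≠ 0 := fun i => ne_of_gt (hl i)
  have hlU : ∀ i, l i ∈ 𝕌 := l_mem_subfield 𝕌 P hUP hpos hrow l hl hlsum hperron hn
  have hl1 : ∀ i, l i ≤ 1 := by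
    intro i
    rw [← hlsum]
    exact Finset.single_le_sum (fun j _ => le_of_lt (hl j)) (Finset.mem_univ i)
  -- the column-stochastic conjugate A = D P D⁻¹
  set A : Matrix (Fin n) (Fin n) ℝ := Matrix.of fun i j => l i / l j * P i j with hAdef
  set c : Fin n → ℝ := fun i => (∑ r, A i r) - 1 with hcdef
  have hApos : ∀ i j, 0 < A i j := fun i j => by
    simp only [hAdef, Matrix.of_apply]
    exact mul_pos (div_pos (hl i) (hl j)) (hpos i j)
  have hAU : ∀ i j, A i j ∈ 𝕌 := fun i j => by
    simp only [hAdef, Matrix.of_apply]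
    exact mul_mem (div_mem (hlU i) (hlU j)) (hUP i j)
  have hAcol : ∀ j, ∑ i, A i j = 1 := by
    intro j
    have h1 : ∑ i, A i j = (∑ i, l i * P i j) / l j := by
      rw [Finset.sum_div]
      exact Finset.sum_congr rfl fun i _ => by simp only [hAdef, Matrix.of_apply]; ring
    rw [h1, hperron j, div_self (hl0 j)]
  have hArow : ∀ i, ∑ r, A i r = c i + 1 := fun i => by simp [hcdef]
  have hcsum : ∑ i, c i = 0 := by
    simp only [hcdef]
    rw [Finset.sum_sub_distrib, show (∑ x, ∑ r, A x r) = ∑ r, ∑ x, A x r from Finset.sum_comm]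
    rw [Finset.sum_congr rfl fun j (_ : j ∈ Finset.univ) => hAcol j]
    simp
  have hcU : ∀ i, c i ∈ 𝕌 := fun i =>
    sub_mem (sum_mem fun r _ => hAU i r) (one_mem 𝕌)
  have hcond' : ∀ i j, c i < n * A i j := by
    intro i j
    have := hcond i j
    simp only [hcdef, hAdef, Matrix.of_apply]
    have he : ∑ r, l i / l r * P i r = ∑ k, (l i / l k) * P i k := rfl
    rw [he]
    linarith
  -- the vector u with  A u - u = c
  set u : Fin n → ℝ := fun i => 1 - n * l i with hudef
  have huU : ∀ i, u i ∈ 𝕌 := fun i =>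
    sub_mem (one_mem 𝕌) (mul_mem (natCast_mem 𝕌 n) (hlU i))
  have husum : ∑ i, u i = 0 := by
    simp only [hudef]
    rw [Finset.sum_sub_distrib, ← Finset.mul_sum, hlsum]
    simp
  have hAu : ∀ i, ∑ r, A i r * u r = c i + u i := by
    intro i
    have h1 : ∀ r, A i r * u r = A i r - (n:ℝ) * (l i * P i r) := by
      intro r
      have hAl : A i r * l r = l i * P i r := by
        simp only [hAdef, Matrix.of_apply]
        field_simp
        rw [mul_right_comm]
        exact mul_div_cancel_right₀ _ (hl0 r)
      rw [← hAl]
      simp only [hudef]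
      ring
    rw [Finset.sum_congr rfl fun r (_ : r ∈ Finset.univ) => h1 r, Finset.sum_sub_distrib,
      hArow i]
    have h2 : ∑ r, (n:ℝ) * (l i * P i r) = n * l i := by
      rw [← Finset.mul_sum, ← Finset.mul_sum, hrow i, mul_one]
    rw [h2]
    simp only [hudef]
    ring
  -- the doubly stochastic matrix Q
  set Q : Matrix (Fin n) (Fin n) ℝ := Matrix.of fun i j => A i j - c i / n with hQdef
  have hQpos : ∀ i j, 0 < Q i j := by
    intro i j
    simp only [hQdef, Matrix.of_apply]
    have h2 : c i / n < A i j := by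
      rw [div_lt_iff₀ hnR]
      nlinarith [hcond' i j]
    linarith
  have hQU : ∀ i j, Q i j ∈ 𝕌 := fun i j =>
    sub_mem (hAU i j) (div_mem (hcU i) (natCast_mem 𝕌 n))
  have hQrow : ∀ i, ∑ j, Q i j = 1 := by
    intro i
    simp only [hQdef, Matrix.of_apply]
    rw [Finset.sum_sub_distrib, hArow i, Finset.sum_const, Finset.card_univ,
      Fintype.card_fin, nsmul_eq_mul]
    field_simp
    ring
  have hQcol : ∀ j, ∑ i, Q i j = 1 := by
    intro j
    simp only [hQdef, Matrix.of_apply]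
    rw [Finset.sum_sub_distrib, hAcol j, ← Finset.sum_div, hcsum]
    simp
  -- the similarity
  set b0 : Fin n → ℝ := fun i => u i / n with hb0def
  have hb0sum : ∑ r, b0 r = 0 := by
    simp only [hb0def]
    rw [← Finset.sum_div, husum]
    simp
  have hone : (1:ℝ) + ∑ r, b0 r ≠ 0 := by rw [hb0sum]; norm_num
  have hneg : (fun i => -b0 i / (1 + ∑ r, b0 r)) = fun i => -b0 i := by
    funext i; rw [hb0sum]; simp
  set D : Matrix (Fin n) (Fin n) ℝ := Matrix.diagonal l with hDdef
  set Dinv : Matrix (Fin n) (Fin n) ℝ := Matrix.diagonal (fun i => (l i)⁻¹) with hDinvdef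
  have hDD : D * Dinv = 1 := by
    rw [hDdef, hDinvdef, Matrix.diagonal_mul_diagonal]
    rw [show (fun i => l i * (l i)⁻¹) = fun _ => (1:ℝ) from
      funext fun i => mul_inv_cancel₀ (hl0 i), Matrix.diagonal_one]
  have hDinvD : Dinv * D = 1 := by
    rw [hDdef, hDinvdef, Matrix.diagonal_mul_diagonal]
    rw [show (fun i => (l i)⁻¹ * l i) = fun _ => (1:ℝ) from
      funext fun i => inv_mul_cancel₀ (hl0 i), Matrix.diagonal_one]
  have hDPD : D * P * Dinv = A := by
    ext i j
    rw [hDdef, hDinvdef, Matrix.mul_diagonal, Matrix.diagonal_mul]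
    simp only [hAdef, Matrix.of_apply]
    ring
  set M : Matrix (Fin n) (Fin n) ℝ := Wb b0 * D with hMdef
  set Minv : Matrix (Fin n) (Fin n) ℝ := Dinv * Wb (fun i => -b0 i) with hMinvdef
  have hWbinv : Wb b0 * Wb (fun i => -b0 i) = 1 := by
    have := Wb_inv_right b0 hone
    rwa [hneg] at this
  have hWbinv' : Wb (fun i => -b0 i) * Wb b0 = 1 := by
    have := Wb_inv_left b0 hone
    rwa [hneg] at this
  have hMMinv : M * Minv = 1 := by
    rw [hMdef, hMinvdef, Matrix.mul_assoc, ← Matrix.mul_assoc D, hDD, Matrix.one_mul, hWbinv]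
  have hMinvM : Minv * M = 1 := by
    rw [hMdef, hMinvdef, Matrix.mul_assoc, ← Matrix.mul_assoc (Wb fun i => -b0 i), hWbinv',
      Matrix.one_mul, hDinvD]
  have hMunit : IsUnit M := (Matrix.isUnit_iff_isUnit_det M).mpr
    (Matrix.isUnit_det_of_right_inverse hMMinv)
  have hMinv_eq : M⁻¹ = Minv := Matrix.inv_eq_right_inv hMMinv
  have hconjQ : M * P * M⁻¹ = Q := by
    rw [hMinv_eq, hMdef, hMinvdef]
    have hassoc : Wb b0 * D * P * (Dinv * Wb fun i => -b0 i)
        = Wb b0 * (D * P * Dinv) * Wb (fun i => -b0 i) := by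
      simp only [Matrix.mul_assoc]
    rw [hassoc, hDPD, ← hneg, conj_formula A b0 hAcol hone]
    ext i j
    simp only [Matrix.of_apply, hQdef, hb0sum]
    have hsb : ∑ r, A i r * b0 r = (c i + u i) / n := by
      simp only [hb0def]
      rw [Finset.sum_congr rfl (fun r (_ : r ∈ Finset.univ) => by
        show A i r * (u r / n) = A i r * u r / n
        ring), ← Finset.sum_div, hAu i]
    rw [hsb]
    simp only [hb0def]
    field_simp
    ring
  have hMU : ∀ i j, M i j ∈ 𝕌 := by
    intro i j
    rw [hMdef, hDdef, Matrix.mul_diagonal]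
    refine mul_mem ?_ (hlU j)
    rw [Wb_apply]
    refine add_mem ?_ (div_mem (huU i) (natCast_mem 𝕌 n))
    split <;> [exact one_mem 𝕌; exact zero_mem 𝕌]
  have hMinvU : ∀ i j, M⁻¹ i j ∈ 𝕌 := by
    intro i j
    rw [hMinv_eq, hMinvdef, hDinvdef, Matrix.diagonal_mul]
    refine mul_mem (inv_mem (hlU i)) ?_
    rw [Wb_apply]
    refine add_mem ?_ (neg_mem (div_mem (huU i) (natCast_mem 𝕌 n)))
    split <;> [exact one_mem 𝕌; exact zero_mem 𝕌]
    -- the SSE chain, via sse_chain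
  have huB : ∀ i, |u i| ≤ (n:ℝ) + 1 := by
    intro i
    rw [abs_le]
    constructor
    · simp only [hudef]; nlinarith [hl1 i]
    · simp only [hudef]; nlinarith [hl i]
  have hchain : SSEn {x : ℝ | x ∈ 𝕌 ∧ 0 ≤ x} A Q :=
    sse_chain 𝕌 hn A Q c u ((n:ℝ)+1) (by positivity) hAU hApos hAcol hcU hcsum
      huU husum huB hAu hQdef hQU hQpos
  have esse0 : ESSEn {x : ℝ | x ∈ 𝕌 ∧ 0 ≤ x} P A := by
    refine ⟨Dinv, D * P, ?_, ?_, ?_, ?_⟩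
    · intro i j
      rw [hDinvdef, Matrix.diagonal_apply]
      split
      · next h => exact ⟨by rw [h]; exact inv_mem (hlU j), inv_nonneg.mpr (hl i).le⟩
      · exact ⟨zero_mem 𝕌, le_refl 0⟩
    · intro i j
      rw [hDdef, Matrix.diagonal_mul]
      exact ⟨mul_mem (hlU i) (hUP i j), le_of_lt (mul_pos (hl i) (hpos i j))⟩
    · rw [← Matrix.mul_assoc, hDinvD, Matrix.one_mul]
    · exact hDPD.symm
  exact ⟨Q, hQU, hQpos, hQrow, hQcol, ⟨M, hMunit, hMU, hMinvU, hconjQ.symm⟩,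
    Relation.ReflTransGen.head esse0 hchain⟩
end

section
/- There is no 3×3 doubly stochastic real matrix whose characteristic polynomial equals t(t − 1)(t + 1) = t³ − t. -/
open Matrix Polynomial

/-- There is no `3 × 3` doubly stochastic real matrix whose characteristic
polynomial is `t(t-1)(t+1) = t³ - t`. -/
theorem stmt10 :
    ¬ ∃ A : Matrix (Fin 3) (Fin 3) ℝ,
      (∀ i j, 0 ≤ A i j) ∧ (∀ i, ∑ j, A i j = 1) ∧ (∀ j, ∑ i, A i j = 1) ∧
      A.charpoly = X ^ 3 - X := by
  rintro ⟨A, hpos, hrow, hcol, hcp⟩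
  rw [Matrix.charpoly, Matrix.det_fin_three] at hcp
  simp only [charmatrix_apply, Matrix.diagonal_apply, if_pos rfl, if_true,
    show ((0:Fin 3) = 1) = False by simp, show ((0:Fin 3) = 2) = False by simp,
    show ((1:Fin 3) = 0) = False by simp, show ((1:Fin 3) = 2) = False by simp,
    show ((2:Fin 3) = 0) = False by simp, show ((2:Fin 3) = 1) = False by simp,
    if_false, zero_sub] at hcp
  have hx : ∀ x : ℝ, (x - A 0 0) * (x - A 1 1) * (x - A 2 2)
      - (x - A 0 0) * A 1 2 * A 2 1 - A 0 1 * A 1 0 * (x - A 2 2)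
      + -(A 0 1 * A 1 2 * A 2 0) + -(A 0 2 * A 1 0 * A 2 1)
      - A 0 2 * (x - A 1 1) * A 2 0 = x ^ 3 - x := by
    intro x
    have h := congrArg (Polynomial.eval x) hcp
    simp at h
    linear_combination h
  have h0 := hx 0
  have h1 := hx 1
  have h2 := hx (-1)
  have r0 := hrow 0; have r1 := hrow 1; have r2 := hrow 2
  have c0 := hcol 0; have c1 := hcol 1
  simp [Fin.sum_univ_three] at r0 r1 r2 c0 c1
  have htr : A 0 0 + A 1 1 + A 2 2 = 0 := by linear_combination (2*h0 - h1 - h2)/2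
  have d0 : A 0 0 = 0 := by linarith [hpos 0 0, hpos 1 1, hpos 2 2]
  have d1 : A 1 1 = 0 := by linarith [hpos 0 0, hpos 1 1, hpos 2 2]
  have d2 : A 2 2 = 0 := by linarith [hpos 0 0, hpos 1 1, hpos 2 2]
  simp only [d0, d1, d2] at h0 h1 h2 r0 r1 r2 c0 c1
  have hS : A 0 1 * A 1 0 + A 0 2 * A 2 0 + A 1 2 * A 2 1 = 1 := by
    linear_combination (h2 - h1)/2
  have e02 : A 0 2 = 1 - A 0 1 := by linarith
  have e20 : A 2 0 = 1 - A 1 0 := by linarith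
  have e12 : A 1 2 = 1 - A 1 0 := by linarith
  have e21 : A 2 1 = 1 - A 0 1 := by linarith
  have hab : A 0 1 + A 1 0 = 1 := by
    rw [e20, e21] at r2; linarith
  rw [e02, e20, e12, e21] at hS
  nlinarith [sq_nonneg (A 0 1 - A 1 0), hS, hab]
end

section
/- For n ∈ ℕ let A_n = (1/(n+2)) · [[1, n, 1], [n, 1, 1], [n, 1, 1]]. Then there exists n₀ ∈ ℕ such that no 3×3 doubly stochastic real matrix is similar over ℝ to A_{n₀}. -/
open Matrix

/-- The matrix `A_n = (1/(n+2)) · [[1, n, 1], [n, 1, 1], [n, 1, 1]]`. -/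
noncomputable def Amat (n : ℕ) : Matrix (Fin 3) (Fin 3) ℝ :=
  (1 / ((n : ℝ) + 2)) • !![1, (n : ℝ), 1; (n : ℝ), 1, 1; (n : ℝ), 1, 1]

set_option maxHeartbeats 1000000 in
/-- Core arithmetic contradiction: a doubly stochastic `3 × 3` matrix cannot have
trace `1/34` and trace of its square equal to `20205/10404`. -/
theorem aux_contra (b11 b12 b13 b21 b22 b23 b31 b32 b33 : ℝ)
    (p11 : 0 ≤ b11) (p12 : 0 ≤ b12) (p13 : 0 ≤ b13)
    (p21 : 0 ≤ b21) (p22 : 0 ≤ b22) (p23 : 0 ≤ b23)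
    (p31 : 0 ≤ b31) (p32 : 0 ≤ b32) (p33 : 0 ≤ b33)
    (r1 : b11 + b12 + b13 = 1) (r2 : b21 + b22 + b23 = 1) (r3 : b31 + b32 + b33 = 1)
    (c1 : b11 + b21 + b31 = 1) (c2 : b12 + b22 + b32 = 1) (c3 : b13 + b23 + b33 = 1)
    (ht : b11 + b22 + b33 = 1/34)
    (hs : b11^2 + b22^2 + b33^2 + 2*(b12*b21 + b13*b31 + b23*b32) = 20205/10404) :
    False := by
  have e13 : b13 = 1 - b11 - b12 := by linarith
  have e32 : b32 = 1 - b22 - b12 := by linarith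
  have e31 : b31 = b12 + b22 - b33 := by linarith
  have e21 : b21 = 1 - b11 - b22 + b33 - b12 := by linarith
  have e23 : b23 = b11 - b33 + b12 := by linarith
  subst e13 e32 e31 e21 e23
  nlinarith [sq_nonneg (1 - 2*b12), mul_nonneg p11 p22, mul_nonneg p11 p33,
    mul_nonneg p22 p33, mul_nonneg p12 p11, mul_nonneg p12 p22, mul_nonneg p12 p33,
    mul_nonneg p33 p13, mul_nonneg p11 p31, mul_nonneg p33 p32, mul_nonneg p22 p23,
    mul_nonneg p13 p31, mul_nonneg p23 p32, mul_nonneg p12 p21]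

/-- There exists `n₀ ∈ ℕ` such that no `3 × 3` doubly stochastic real matrix
is similar over `ℝ` to `A_{n₀}`. -/
theorem stmt11 :
    ∃ n₀ : ℕ, ¬ ∃ (B M : Matrix (Fin 3) (Fin 3) ℝ),
      (∀ i j, 0 ≤ B i j) ∧ (∀ i, ∑ j, B i j = 1) ∧ (∀ j, ∑ i, B i j = 1) ∧
      IsUnit M ∧ B = M * Amat n₀ * M⁻¹ := by
  refine ⟨100, ?_⟩
  rintro ⟨B, M, hpos, hrow, hcol, hM, hB⟩
  have hMdet : IsUnit M.det := (Matrix.isUnit_iff_isUnit_det M).mp hM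
  have hinv : M⁻¹ * M = 1 := Matrix.nonsing_inv_mul _ hMdet
  -- trace is a similarity invariant
  have htr : B.trace = (Amat 100).trace := by
    rw [hB, Matrix.trace_mul_cycle, hinv, Matrix.one_mul]
  -- so is the trace of the square
  have hBB : B * B = M * (Amat 100 * Amat 100) * M⁻¹ := by
    rw [hB]
    simp only [Matrix.mul_assoc]
    rw [← Matrix.mul_assoc M⁻¹ M, hinv, Matrix.one_mul]
  have htr2 : (B * B).trace = (Amat 100 * Amat 100).trace := by
    rw [hBB, Matrix.trace_mul_cycle, hinv, Matrix.one_mul]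
  -- numeric values of the invariants of `Amat 100`
  have hA1 : (Amat 100).trace = 1/34 := by
    norm_num [Amat, Matrix.trace_fin_three, Matrix.smul_apply, Matrix.cons_val_zero,
      Matrix.cons_val_one, Matrix.head_cons, Matrix.cons_val_two, Matrix.tail_cons,
      Matrix.vecHead, Matrix.vecTail, Function.comp]
  have hA2 : (Amat 100 * Amat 100).trace = 20205/10404 := by
    norm_num [Amat, Matrix.trace_fin_three, Matrix.mul_apply, Fin.sum_univ_three,
      Matrix.smul_apply, Matrix.cons_val_zero, Matrix.cons_val_one, Matrix.head_cons,
      Matrix.cons_val_two, Matrix.tail_cons, Matrix.vecHead, Matrix.vecTail, Function.comp]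
  -- express the invariants of `B` in terms of its entries
  have ht : B 0 0 + B 1 1 + B 2 2 = 1/34 := by
    have := htr.trans hA1
    rwa [Matrix.trace_fin_three] at this
  have hs : (B 0 0)^2 + (B 1 1)^2 + (B 2 2)^2 +
      2*(B 0 1 * B 1 0 + B 0 2 * B 2 0 + B 1 2 * B 2 1) = 20205/10404 := by
    have := htr2.trans hA2
    rw [Matrix.trace_fin_three] at this
    simp only [Matrix.mul_apply, Fin.sum_univ_three] at this
    ring_nf at this ⊢
    linarith
  have hr0 := hrow 0; have hr1 := hrow 1; have hr2 := hrow 2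
  have hc0 := hcol 0; have hc1 := hcol 1; have hc2 := hcol 2
  simp only [Fin.sum_univ_three] at hr0 hr1 hr2 hc0 hc1 hc2
  exact aux_contra (B 0 0) (B 0 1) (B 0 2) (B 1 0) (B 1 1) (B 1 2) (B 2 0) (B 2 1) (B 2 2)
    (hpos 0 0) (hpos 0 1) (hpos 0 2) (hpos 1 0) (hpos 1 1) (hpos 1 2)
    (hpos 2 0) (hpos 2 1) (hpos 2 2) hr0 hr1 hr2 hc0 hc1 hc2 ht hs
end

section
/- For t ∈ [0, 1] define the 2×2 matrix P_t = (1/4)·[[3+t, 1−t], [1+t, 3−t]]. Then for all t ∈ [0, 1), the matrix P_t is positive and stochastic, P_t is similar over ℝ to P_0, and P_t is strong shift equivalent over ℝ₊ to P_0. -/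
open Matrix BigOperators

/-- Elementary strong shift equivalence between square real matrices of possibly different
sizes, with all entries of the connecting matrices lying in the set `S ⊆ ℝ`. -/
def ESSE (S : Set ℝ) {m k : ℕ}
    (A : Matrix (Fin m) (Fin m) ℝ) (B : Matrix (Fin k) (Fin k) ℝ) : Prop :=
  ∃ (U : Matrix (Fin m) (Fin k) ℝ) (V : Matrix (Fin k) (Fin m) ℝ),
    (∀ i j, U i j ∈ S) ∧ (∀ i j, V i j ∈ S) ∧ A = U * V ∧ B = V * U

/-- Strong shift equivalence over `S`: a finite chain of elementary strong shift equivalences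
through square matrices of possibly varying sizes. -/
inductive SSE (S : Set ℝ) :
    ∀ {m k : ℕ}, Matrix (Fin m) (Fin m) ℝ → Matrix (Fin k) (Fin k) ℝ → Prop
  | refl {m : ℕ} (A : Matrix (Fin m) (Fin m) ℝ) : SSE S A A
  | tail {m k l : ℕ} {A : Matrix (Fin m) (Fin m) ℝ} {B : Matrix (Fin k) (Fin k) ℝ}
      {C : Matrix (Fin l) (Fin l) ℝ} : SSE S A B → ESSE S B C → SSE S A C

/-- The matrix `P_t = (1/4) · [[3+t, 1−t], [1+t, 3−t]]`. -/
noncomputable def Pmat (t : ℝ) : Matrix (Fin 2) (Fin 2) ℝ :=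
  (1 / 4 : ℝ) • !![3 + t, 1 - t; 1 + t, 3 - t]

lemma SSE.head {S : Set ℝ} {m k l : ℕ} {A : Matrix (Fin m) (Fin m) ℝ}
    {B : Matrix (Fin k) (Fin k) ℝ} {C : Matrix (Fin l) (Fin l) ℝ}
    (h : ESSE S A B) (h2 : SSE S B C) : SSE S A C := by
  induction h2 with
  | refl B => exact (SSE.refl A).tail h
  | tail _ hbc ih => exact (ih h).tail hbc

lemma esse_step (t s : ℝ) (hs : 0 ≤ s) (hst : s ≤ t) (ht : t ≤ 1)
    (hcond : 3*t - 1 ≤ s*(3-t)) :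
    ESSE {x : ℝ | 0 ≤ x} (Pmat t) (Pmat s) := by
  have h0s : (0:ℝ) < 1 + s := by linarith
  have h0t : (0:ℝ) < 1 + t := by linarith
  refine ⟨!![(1+s)/(1+t), (t-s)/(1+t); 0, 1],
    !![(1+t)*(3+s)/(4*(1+s)), (1+3*s-3*t-t*s)/(4*(1+s)); (1+t)/4, (3-t)/4], ?_, ?_, ?_, ?_⟩
  · intro i j
    fin_cases i <;> fin_cases j <;> simp [Set.mem_setOf_eq] <;>
      first
      | positivity
      | (apply div_nonneg <;> linarith)
  · intro i j
    fin_cases i <;> fin_cases j <;> simp [Set.mem_setOf_eq]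
    · positivity
    · apply div_nonneg _ (by linarith)
      linarith [hcond]
    · linarith
    · linarith
  · ext i j
    fin_cases i <;> fin_cases j <;>
      simp [Pmat, Matrix.mul_apply, Fin.sum_univ_two] <;>
      field_simp <;> ring
  · ext i j
    fin_cases i <;> fin_cases j <;>
      simp [Pmat, Matrix.mul_apply, Fin.sum_univ_two] <;>
      field_simp <;> ring

lemma sse_aux : ∀ n : ℕ, ∀ t : ℝ, 0 ≤ t → t ≤ 1 - (3/4:ℝ)^n →
    SSE {x : ℝ | 0 ≤ x} (Pmat t) (Pmat 0) := by
  intro n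
  induction n with
  | zero =>
    intro t h0 hle
    have : t = 0 := by simp at hle; linarith
    rw [this]
    exact SSE.refl _
  | succ n ih =>
    intro t h0 hle
    have hpow : (0:ℝ) < (3/4:ℝ)^(n+1) := by positivity
    have ht1 : t < 1 := by linarith
    by_cases hc : 3*t - 1 ≤ 0
    · exact SSE.head (esse_step t 0 le_rfl h0 ht1.le (by linarith)) (SSE.refl _)
    · push_neg at hc
      set s := (3*t-1)/(3-t) with hsdef
      have h3t : (0:ℝ) < 3 - t := by linarith
      have hs0 : 0 ≤ s := div_nonneg (by linarith) h3t.le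
      have hst : s ≤ t := by
        rw [hsdef, div_le_iff₀ h3t]
        nlinarith
      have hcond : 3*t - 1 ≤ s*(3-t) := by
        rw [hsdef, div_mul_cancel₀ _ h3t.ne']
      have hsle : s ≤ 1 - (3/4:ℝ)^n := by
        have h1 : (3-t) * (3/4:ℝ)^n ≤ 4 - 4*t := by
          have h2 : (3/4:ℝ)^n * 3 ≤ 4 * (1 - t) := by
            have : (3/4:ℝ)^(n+1) = 3/4 * (3/4)^n := by ring
            nlinarith [pow_pos (by norm_num : (0:ℝ) < 3/4) n]
          nlinarith [pow_pos (by norm_num : (0:ℝ) < 3/4) n]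
        rw [hsdef]
        rw [div_le_iff₀ h3t]
        nlinarith
      exact SSE.head (esse_step t s hs0 hst ht1.le hcond) (ih s hs0 hsle)

/-- For every `t ∈ [0, 1)`, the matrix `P_t` is positive and stochastic,
similar over `ℝ` to `P_0`, and strong shift equivalent over `ℝ₊` to `P_0`. -/
theorem stmt15 (t : ℝ) (h0 : 0 ≤ t) (h1 : t < 1) :
    (∀ i j, 0 < Pmat t i j) ∧ (∀ i, ∑ j, Pmat t i j = 1) ∧
    (∃ M : Matrix (Fin 2) (Fin 2) ℝ, IsUnit M ∧ Pmat t = M * Pmat 0 * M⁻¹) ∧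
    SSE {x : ℝ | 0 ≤ x} (Pmat t) (Pmat 0) := by
  refine ⟨?_, ?_, ?_, ?_⟩
  · intro i j
    fin_cases i <;> fin_cases j <;> simp [Pmat] <;> linarith
  · intro i
    fin_cases i <;> simp [Pmat, Fin.sum_univ_two] <;> ring
  · refine ⟨!![(2-t)/2, t/2; -(t/2), (2+t)/2], ?_, ?_⟩
    · rw [Matrix.isUnit_iff_isUnit_det]
      have : (!![(2-t)/2, t/2; -(t/2), (2+t)/2] : Matrix (Fin 2) (Fin 2) ℝ).det = 1 := by
        rw [Matrix.det_fin_two_of]; ring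
      rw [this]; exact isUnit_one
    · have hdet : IsUnit (!![(2-t)/2, t/2; -(t/2), (2+t)/2] : Matrix (Fin 2) (Fin 2) ℝ).det := by
        have : (!![(2-t)/2, t/2; -(t/2), (2+t)/2] : Matrix (Fin 2) (Fin 2) ℝ).det = 1 := by
          rw [Matrix.det_fin_two_of]; ring
        rw [this]; exact isUnit_one
      have := Matrix.invertibleOfIsUnitDet _ hdet
      rw [eq_comm, Matrix.mul_inv_eq_iff_eq_mul_of_invertible]
      ext i j
      fin_cases i <;> fin_cases j <;>
        simp [Pmat, Matrix.mul_apply, Fin.sum_univ_two] <;> ring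
  · obtain ⟨n, hn⟩ := exists_pow_lt_of_lt_one (by linarith : (0:ℝ) < 1 - t)
      (by norm_num : (3/4:ℝ) < 1)
    exact sse_aux n t h0 (by linarith)
end

section
/- For t ∈ [0, 1] define the 2×2 matrix P_t = (1/4)·[[3+t, 1−t], [1+t, 3−t]]. Then for every integer L ≥ 2 there exists t ∈ (0, 1) such that there is no strong shift equivalence over ℝ₊ between P_0 and P_t of lag less than L in which every matrix of the chain has size less than L. -/
open Matrix BigOperators

/-- `SSEls S N A B p` : there is a strong shift equivalence over `S` from `A` to `B` of lag
`p` in which every square matrix of the chain has size (strictly) less than `N`. -/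
inductive SSEls (S : Set ℝ) (N : ℕ) :
    ∀ {m k : ℕ}, Matrix (Fin m) (Fin m) ℝ → Matrix (Fin k) (Fin k) ℝ → ℕ → Prop
  | refl {m : ℕ} (hm : m < N) (A : Matrix (Fin m) (Fin m) ℝ) : SSEls S N A A 0
  | tail {m k l p : ℕ} {A : Matrix (Fin m) (Fin m) ℝ} {B : Matrix (Fin k) (Fin k) ℝ}
      {C : Matrix (Fin l) (Fin l) ℝ} (hl : l < N) :
      SSEls S N A B p → ESSE S B C → SSEls S N A C (p + 1)

namespace S16

abbrev Mx (L : ℕ) := Matrix (Fin L) (Fin L) ℝ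

/-- zero-padding of a rectangular matrix into an `L × L` matrix -/
def padM {m k : ℕ} (L : ℕ) (A : Matrix (Fin m) (Fin k) ℝ) : Matrix (Fin L) (Fin L) ℝ :=
  Matrix.of fun a b =>
    if ha : (a : ℕ) < m then if hb : (b : ℕ) < k then A ⟨a, ha⟩ ⟨b, hb⟩ else 0 else 0

lemma padM_nonneg {m k L : ℕ} {A : Matrix (Fin m) (Fin k) ℝ} (hA : ∀ i j, 0 ≤ A i j)
    (a b : Fin L) : 0 ≤ padM L A a b := by
  unfold padM
  simp only [Matrix.of_apply]
  split
  · split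
    · exact hA _ _
    · exact le_refl 0
  · exact le_refl 0

lemma padM_mul {m k n L : ℕ} (hk : k ≤ L)
    (A : Matrix (Fin m) (Fin k) ℝ) (B : Matrix (Fin k) (Fin n) ℝ) :
    padM L (A * B) = padM L A * padM L B := by
  ext a b
  rw [Matrix.mul_apply]
  by_cases ha : (a : ℕ) < m
  · by_cases hb : (b : ℕ) < n
    · set g : ℕ → ℝ := fun j =>
        if h : j < k then A ⟨a, ha⟩ ⟨j, h⟩ * B ⟨j, h⟩ ⟨b, hb⟩ else 0 with hg
      have h1 : ∀ c : Fin L, padM L A a c * padM L B c b = g (c : ℕ) := by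
        intro c
        by_cases hc : (c : ℕ) < k
        · simp [padM, hg, ha, hb, hc]
        · simp [padM, hg, ha, hb, hc]
      have h2 : ∀ c : Fin k, A ⟨a, ha⟩ c * B c ⟨b, hb⟩ = g (c : ℕ) := by
        intro c
        simp [hg, c.2]
      calc padM L (A * B) a b = (A * B) ⟨a, ha⟩ ⟨b, hb⟩ := by simp [padM, ha, hb]
        _ = ∑ c : Fin k, A ⟨a, ha⟩ c * B c ⟨b, hb⟩ := Matrix.mul_apply
        _ = ∑ c : Fin k, g (c : ℕ) := by
              exact Finset.sum_congr rfl fun c _ => h2 c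
        _ = ∑ j ∈ Finset.range k, g j := Fin.sum_univ_eq_sum_range _ k
        _ = ∑ j ∈ Finset.range L, g j := by
              refine Finset.sum_subset (Finset.range_subset_range.2 hk) ?_
              intro j _ hj
              rw [Finset.mem_range] at hj
              simp [hg, hj]
        _ = ∑ c : Fin L, g (c : ℕ) := (Fin.sum_univ_eq_sum_range _ L).symm
        _ = ∑ c : Fin L, padM L A a c * padM L B c b := by
              exact Finset.sum_congr rfl fun c _ => (h1 c).symm
    · have hz : padM L (A * B) a b = 0 := by simp [padM, hb]
      rw [hz]
      refine (Finset.sum_eq_zero fun c _ => ?_).symm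
      have : padM L B c b = 0 := by simp [padM, hb]
      rw [this, mul_zero]
  · have hz : padM L (A * B) a b = 0 := by simp [padM, ha]
    rw [hz]
    refine (Finset.sum_eq_zero fun c _ => ?_).symm
    have : padM L A a c = 0 := by simp [padM, ha]
    rw [this, zero_mul]

lemma SSEls_sizes {S : Set ℝ} {N m k p : ℕ} {A : Matrix (Fin m) (Fin m) ℝ}
    {B : Matrix (Fin k) (Fin k) ℝ} (h : SSEls S N A B p) : m < N ∧ k < N := by
  induction h with
  | refl hm A => exact ⟨hm, hm⟩
  | tail hl h1 h2 ih => exact ⟨ih.1, hl⟩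

/-- chains of elementary SSE's over the nonnegative reals at fixed size L -/
def PChain (L : ℕ) (A : Mx L) : ℕ → Mx L → Prop
  | 0, B => A = B
  | p + 1, B => ∃ Cm U V : Mx L, PChain L A p Cm ∧ (∀ a b, 0 ≤ U a b) ∧ (∀ a b, 0 ≤ V a b)
      ∧ Cm = U * V ∧ B = V * U

lemma sse_to_pchain {L m k p : ℕ} {A : Matrix (Fin m) (Fin m) ℝ} {B : Matrix (Fin k) (Fin k) ℝ}
    (h : SSEls {x : ℝ | 0 ≤ x} L A B p) :
    PChain L (padM L A) p (padM L B) ∧ m < L ∧ k < L := by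
  induction h with
  | refl hm A => exact ⟨rfl, hm, hm⟩
  | @tail kk ll pp AA BB CC hl hchain hesse ih =>
      obtain ⟨U, V, hU, hV, hBUV, hCVU⟩ := hesse
      refine ⟨⟨padM L BB, padM L U, padM L V, ih.1, padM_nonneg hU, padM_nonneg hV, ?_, ?_⟩,
        ih.2.1, hl⟩
      · rw [hBUV]; exact padM_mul hl.le U V
      · rw [hCVU]; exact padM_mul ih.2.2.le V U
/-- normalized chains with entry bounds -/
def NChain (L : ℕ) (b : ℝ) (A : Mx L) : ℕ → Mx L → Prop
  | 0, B => A = B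
  | p + 1, B => ∃ Cm U V : Mx L, NChain L b A p Cm ∧ (∀ a c, U a c ∈ Set.Icc (0:ℝ) b)
      ∧ (∀ a c, V a c ∈ Set.Icc (0:ℝ) b) ∧ Cm = U * V ∧ B = V * U

lemma NChain_mono {L : ℕ} {b b' : ℝ} (hbb : b ≤ b') {A : Mx L} :
    ∀ {p : ℕ} {Bend : Mx L}, NChain L b A p Bend → NChain L b' A p Bend := by
  intro p
  induction p with
  | zero => intro Bend h; exact h
  | succ p ih =>
      rintro Bend ⟨Cm, U, V, h1, h2, h3, h4, h5⟩
      exact ⟨Cm, U, V, ih h1, fun a c => ⟨(h2 a c).1, le_trans (h2 a c).2 hbb⟩,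
        fun a c => ⟨(h3 a c).1, le_trans (h3 a c).2 hbb⟩, h4, h5⟩

/-- diagonal conjugation -/
noncomputable def cj {L : ℕ} (E : Fin L → ℝ) (A : Mx L) : Mx L :=
  Matrix.diagonal E * A * Matrix.diagonal fun i => (E i)⁻¹

lemma cj_apply {L : ℕ} (E : Fin L → ℝ) (A : Mx L) (a b : Fin L) :
    cj E A a b = E a * A a b * (E b)⁻¹ := by
  simp [cj, Matrix.mul_diagonal, Matrix.diagonal_mul]

lemma cj_one {L : ℕ} (A : Mx L) : cj (fun _ => (1:ℝ)) A = A := by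
  ext a b
  simp [cj_apply]

lemma diag_inv_diag {L : ℕ} {E : Fin L → ℝ} (hE : ∀ i, 0 < E i) :
    (Matrix.diagonal fun i => (E i)⁻¹) * Matrix.diagonal E = (1 : Mx L) := by
  rw [Matrix.diagonal_mul_diagonal]
  have : (fun i => (E i)⁻¹ * E i) = fun _ => (1:ℝ) :=
    funext fun i => inv_mul_cancel₀ (hE i).ne'
  rw [this, Matrix.diagonal_one]

lemma diag_cancel_left {L : ℕ} {E : Fin L → ℝ} (hE : ∀ i, 0 < E i) (X : Mx L) :
    (Matrix.diagonal fun i => (E i)⁻¹) * (Matrix.diagonal E * X) = X := by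
  rw [← Matrix.mul_assoc, diag_inv_diag hE, Matrix.one_mul]

lemma normstep {L : ℕ} (hL : 0 < L) (U V : Mx L) (hU : ∀ a b, 0 ≤ U a b)
    (hV : ∀ a b, 0 ≤ V a b) (E : Fin L → ℝ) (hE : ∀ i, 0 < E i) (c : ℝ) (hc : 1 ≤ c)
    (hbd : ∀ a b, cj E (V * U) a b ≤ c) :
    ∃ (F : Fin L → ℝ) (U₂ V₂ : Mx L), (∀ i, 0 < F i)
      ∧ (∀ a b, U₂ a b ∈ Set.Icc 0 c) ∧ (∀ a b, V₂ a b ∈ Set.Icc (0:ℝ) 1)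
      ∧ U₂ * V₂ = cj F (U * V) ∧ V₂ * U₂ = cj E (V * U) := by
  haveI : NeZero L := ⟨hL.ne'⟩
  have hne : (Finset.univ : Finset (Fin L)).Nonempty := Finset.univ_nonempty
  set U₁ : Mx L := U * Matrix.diagonal (fun i => (E i)⁻¹) with hU₁def
  set V₁ : Mx L := Matrix.diagonal E * V with hV₁def
  have hU₁app : ∀ a b, U₁ a b = U a b * (E b)⁻¹ := fun a b => Matrix.mul_diagonal _ _ _ _
  have hV₁app : ∀ a b, V₁ a b = E a * V a b := fun a b => Matrix.diagonal_mul _ _ _ _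
  have hU₁n : ∀ a b, 0 ≤ U₁ a b := fun a b => by
    rw [hU₁app]; exact mul_nonneg (hU a b) (inv_nonneg.2 (hE b).le)
  have hV₁n : ∀ a b, 0 ≤ V₁ a b := fun a b => by
    rw [hV₁app]; exact mul_nonneg (hE a).le (hV a b)
  have hU₁V₁ : U₁ * V₁ = U * V := by
    rw [hU₁def, hV₁def, Matrix.mul_assoc U _ _, diag_cancel_left hE V]
  have hV₁U₁ : V₁ * U₁ = cj E (V * U) := by
    rw [hU₁def, hV₁def, cj, Matrix.mul_assoc (Matrix.diagonal E) V _,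
      Matrix.mul_assoc (Matrix.diagonal E) (V * U) _, Matrix.mul_assoc V U _]
  set ν : Fin L → ℝ := fun i => Finset.univ.sup' hne (fun j => V₁ j i) with hνdef
  set μ : Fin L → ℝ := fun i => Finset.univ.sup' hne (fun j => U₁ i j) with hμdef
  set F : Fin L → ℝ := fun i => if 0 < ν i then ν i else (max (μ i) 1)⁻¹ with hFdef
  have hmaxpos : ∀ i, (0:ℝ) < max (μ i) 1 := fun i => lt_of_lt_of_le one_pos (le_max_right _ _)
  have hF : ∀ i, 0 < F i := by
    intro i
    rw [hFdef]
    by_cases h : 0 < ν i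
    · simpa [h] using h
    · simp only [h, if_false]
      exact inv_pos.2 (hmaxpos i)
  set U₂ : Mx L := Matrix.diagonal F * U₁ with hU₂def
  set V₂ : Mx L := V₁ * Matrix.diagonal (fun i => (F i)⁻¹) with hV₂def
  have hU₂app : ∀ a b, U₂ a b = F a * U₁ a b := fun a b => Matrix.diagonal_mul _ _ _ _
  have hV₂app : ∀ a b, V₂ a b = V₁ a b * (F b)⁻¹ := fun a b => Matrix.mul_diagonal _ _ _ _
  refine ⟨F, U₂, V₂, hF, ?_, ?_, ?_, ?_⟩
  · -- U₂ entries in [0, c]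
    intro a b
    constructor
    · rw [hU₂app]; exact mul_nonneg (hF a).le (hU₁n a b)
    · rw [hU₂app, hFdef]
      by_cases h : 0 < ν a
      · simp only [h, if_true]
        obtain ⟨j₀, _, hj₀⟩ := Finset.exists_mem_eq_sup' hne (fun j => V₁ j a)
        have hterm : ν a * U₁ a b = V₁ j₀ a * U₁ a b := by rw [hνdef]; rw [← hj₀]
        rw [hterm]
        have hle : V₁ j₀ a * U₁ a b ≤ ∑ x : Fin L, V₁ j₀ x * U₁ x b := by
          refine Finset.single_le_sum (f := fun x => V₁ j₀ x * U₁ x b) ?_ (Finset.mem_univ a)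
          exact fun x _ => mul_nonneg (hV₁n j₀ x) (hU₁n x b)
        refine le_trans hle ?_
        rw [← Matrix.mul_apply, hV₁U₁]
        exact hbd j₀ b
      · simp only [h, if_false]
        have h1 : U₁ a b ≤ max (μ a) 1 := by
          refine le_trans ?_ (le_max_left _ _)
          rw [hμdef]
          exact Finset.le_sup' (fun j => U₁ a j) (Finset.mem_univ b)
        have := mul_le_mul_of_nonneg_left h1 (inv_nonneg.2 (hmaxpos a).le)
        rw [inv_mul_cancel₀ (hmaxpos a).ne'] at this
        exact le_trans this hc
  · -- V₂ entries in [0, 1]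
    intro a b
    constructor
    · rw [hV₂app]; exact mul_nonneg (hV₁n a b) (inv_nonneg.2 (hF b).le)
    · rw [hV₂app, hFdef]
      by_cases h : 0 < ν b
      · simp only [h, if_true]
        have h1 : V₁ a b ≤ ν b := by
          rw [hνdef]
          exact Finset.le_sup' (fun j => V₁ j b) (Finset.mem_univ a)
        have := mul_le_mul_of_nonneg_right h1 (inv_nonneg.2 h.le)
        rwa [mul_inv_cancel₀ h.ne'] at this
      · simp only [h, if_false]
        have h0 : V₁ a b = 0 := by
          have h1 : V₁ a b ≤ ν b := by
            rw [hνdef]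
            exact Finset.le_sup' (fun j => V₁ j b) (Finset.mem_univ a)
          have h2 := not_lt.1 h
          exact le_antisymm (le_trans h1 h2) (hV₁n a b)
        rw [h0, zero_mul]
        exact zero_le_one
  · -- U₂ * V₂ = cj F (U * V)
    rw [hU₂def, hV₂def, Matrix.mul_assoc (Matrix.diagonal F) U₁ _, ← Matrix.mul_assoc U₁ V₁ _,
      hU₁V₁, cj]
    simp only [Matrix.mul_assoc]
  · -- V₂ * U₂ = cj E (V * U)
    rw [hU₂def, hV₂def, Matrix.mul_assoc V₁ _ _, diag_cancel_left hF U₁, hV₁U₁]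
lemma pchain_normalize {L : ℕ} (hL : 0 < L) :
    ∀ (p : ℕ) (A C : Mx L), PChain L A p C → ∀ (E : Fin L → ℝ), (∀ i, 0 < E i) →
    ∀ c : ℝ, 1 ≤ c → (∀ a b, cj E C a b ≤ c) →
    ∃ D : Fin L → ℝ, (∀ i, 0 < D i) ∧ NChain L ((L:ℝ)^p * c) (cj D A) p (cj E C) := by
  intro p
  induction p with
  | zero =>
      intro A C h E hE c hc hbd
      refine ⟨E, hE, ?_⟩
      show cj E A = cj E C
      rw [h]
  | succ p ih =>
      intro A C h E hE c hc hbd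
      obtain ⟨Cm, U, V, hchain, hU, hV, hCm, hC⟩ := h
      have hbd' : ∀ a b, cj E (V * U) a b ≤ c := by
        intro a b; rw [← hC]; exact hbd a b
      obtain ⟨F, U₂, V₂, hF, hU₂, hV₂, hprod1, hprod2⟩ :=
        normstep hL U V hU hV E hE c hc hbd'
      have hL1 : (1:ℝ) ≤ (L:ℝ) := by exact_mod_cast hL
      have hmid : ∀ a b, cj F Cm a b ≤ (L:ℝ) * c := by
        intro a b
        have : cj F Cm = U₂ * V₂ := by rw [hCm, ← hprod1]
        rw [this, Matrix.mul_apply]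
        calc ∑ j, U₂ a j * V₂ j b ≤ ∑ _j : Fin L, c * 1 := by
              refine Finset.sum_le_sum fun j _ => ?_
              exact mul_le_mul (hU₂ a j).2 (hV₂ j b).2 (hV₂ j b).1 (le_trans zero_le_one hc)
          _ = (L:ℝ) * c := by
              simp [Finset.sum_const, Finset.card_univ, mul_comm]
      have ihc : 1 ≤ (L:ℝ) * c := le_trans hc (le_mul_of_one_le_left (le_trans zero_le_one hc) hL1)
      obtain ⟨D, hD, hNC⟩ := ih A Cm hchain F hF ((L:ℝ) * c) ihc hmid
      refine ⟨D, hD, ?_⟩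
      have hbeq : (L:ℝ)^p * ((L:ℝ)*c) = (L:ℝ)^(p+1) * c := by ring
      refine ⟨cj F Cm, U₂, V₂, ?_, ?_, ?_, ?_, ?_⟩
      · exact hbeq ▸ hNC
      · intro a b
        refine ⟨(hU₂ a b).1, le_trans (hU₂ a b).2 ?_⟩
        have h1 : (1:ℝ) ≤ (L:ℝ)^(p+1) := one_le_pow₀ hL1
        nlinarith
      · intro a b
        refine ⟨(hV₂ a b).1, le_trans (hV₂ a b).2 ?_⟩
        have h1 : (1:ℝ) ≤ (L:ℝ)^(p+1) := one_le_pow₀ hL1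
        nlinarith
      · rw [hCm, ← hprod1]
      · rw [hC, ← hprod2]

lemma nchain_fun {L : ℕ} {b : ℝ} : ∀ (p : ℕ) (A Bend : Mx L), NChain L b A p Bend →
    ∃ U V : ℕ → Mx L,
      (∀ i, i < p → (∀ a c, U i a c ∈ Set.Icc 0 b) ∧ (∀ a c, V i a c ∈ Set.Icc 0 b))
      ∧ (0 < p → U 0 * V 0 = A)
      ∧ (∀ i, i + 1 < p → V i * U i = U (i+1) * V (i+1))
      ∧ (∀ i, i + 1 = p → V i * U i = Bend)
      ∧ (p = 0 → A = Bend) := by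
  intro p
  induction p with
  | zero =>
      intro A Bend h
      exact ⟨fun _ => 1, fun _ => 1, fun i hi => absurd hi (Nat.not_lt_zero i),
        fun h0 => absurd h0 (lt_irrefl 0), fun i hi => absurd hi (by omega),
        fun i hi => absurd hi (by omega), fun _ => h⟩
  | succ p ih =>
      intro A Bend h
      obtain ⟨Cm, Ust, Vst, hch, hUb, hVb, hCm, hBend⟩ := h
      obtain ⟨U, V, hbd, h0, hcoh, hlast, heq0⟩ := ih A Cm hch
      refine ⟨fun i => if i = p then Ust else U i, fun i => if i = p then Vst else V i,
        ?_, ?_, ?_, ?_, by omega⟩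
      · intro i hi
        by_cases hip : i = p
        · simp only [hip, if_pos rfl]
          exact ⟨hUb, hVb⟩
        · simp only [if_neg hip]
          exact hbd i (by omega)
      · intro _
        by_cases hp0 : p = 0
        · subst hp0
          show (if (0:ℕ) = 0 then Ust else U 0) * (if (0:ℕ) = 0 then Vst else V 0) = A
          rw [if_pos rfl, if_pos rfl, ← hCm]
          exact (heq0 rfl).symm
        · have h00 : (0:ℕ) ≠ p := fun h => hp0 h.symm
          show (if (0:ℕ) = p then Ust else U 0) * (if (0:ℕ) = p then Vst else V 0) = A
          rw [if_neg h00, if_neg h00]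
          exact h0 (by omega)
      · intro i hi
        by_cases hip : i + 1 = p
        · have hinep : i ≠ p := by omega
          simp only [if_neg hinep, hip, if_pos rfl, eq_self_iff_true, if_true]
          rw [hlast i hip, hCm]
        · have h1 : i ≠ p := by omega
          have h2 : i + 1 ≠ p := hip
          simp only [if_neg h1, if_neg h2]
          exact hcoh i (by omega)
      · intro i hi
        have : i = p := by omega
        subst this
        simp only [if_pos rfl, eq_self_iff_true, if_true]
        exact hBend.symm

lemma nchain_fun_ext {L : ℕ} {b : ℝ} (hb : 1 ≤ b) (p : ℕ) (A Bend : Mx L)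
    (h : NChain L b A p Bend) (hBend : ∀ a c, Bend a c ∈ Set.Icc 0 b) :
    ∃ U V : ℕ → Mx L,
      (∀ i a c, U i a c ∈ Set.Icc 0 b ∧ V i a c ∈ Set.Icc 0 b)
      ∧ U 0 * V 0 = A
      ∧ (∀ i, V i * U i = U (i+1) * V (i+1))
      ∧ (∀ i, p ≤ i + 1 → V i * U i = Bend) := by
  obtain ⟨U, V, hbd, h0, hcoh, hlast, heq0⟩ := nchain_fun p A Bend h
  have hone : ∀ a c : Fin L, (1 : Mx L) a c ∈ Set.Icc (0:ℝ) b := by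
    intro a c
    rw [Matrix.one_apply]
    by_cases hac : a = c
    · simp [hac]; exact hb
    · simp [hac]; exact le_trans zero_le_one hb
  refine ⟨fun i => if i < p then U i else Bend, fun i => if i < p then V i else 1, ?_, ?_, ?_, ?_⟩
  · intro i a c
    by_cases hip : i < p
    · simp only [if_pos hip]
      exact ⟨(hbd i hip).1 a c, (hbd i hip).2 a c⟩
    · simp only [if_neg hip]
      exact ⟨hBend a c, hone a c⟩
  · by_cases hp0 : 0 < p
    · simp only [if_pos hp0]
      exact h0 hp0
    · have hp : p = 0 := by omega
      simp only [hp, if_neg (lt_irrefl 0)]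
      rw [Matrix.mul_one]
      exact (heq0 hp).symm
  · intro i
    rcases lt_trichotomy (i+1) p with h1 | h1 | h1
    · have hi : i < p := by omega
      simp only [if_pos hi, if_pos h1]
      exact hcoh i h1
    · have hi : i < p := by omega
      have hi1 : ¬ (i + 1 < p) := by omega
      simp only [if_pos hi, if_neg hi1]
      rw [Matrix.mul_one, hlast i h1]
    · have hi : ¬ (i < p) := by omega
      have hi1 : ¬ (i + 1 < p) := by omega
      simp only [if_neg hi, if_neg hi1]
      rw [Matrix.mul_one, Matrix.one_mul]
  · intro i hpi
    by_cases hip : i < p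
    · have : i + 1 = p := by omega
      simp only [if_pos hip]
      exact hlast i this
    · simp only [if_neg hip]
      rw [Matrix.one_mul]
lemma Pmat_apply (s : ℝ) (i j : Fin 2) :
    Pmat s i j = if (i:ℕ) = 0 then (if (j:ℕ) = 0 then (3+s)/4 else (1-s)/4)
      else (if (j:ℕ) = 0 then (1+s)/4 else (3-s)/4) := by
  fin_cases i <;> fin_cases j <;>
    simp [Pmat, Matrix.smul_apply] <;> ring

lemma padP_apply {L : ℕ} (s : ℝ) (a b : Fin L) :
    padM L (Pmat s) a b =
      if (a:ℕ) = 0 ∧ (b:ℕ) = 0 then (3+s)/4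
      else if (a:ℕ) = 0 ∧ (b:ℕ) = 1 then (1-s)/4
      else if (a:ℕ) = 1 ∧ (b:ℕ) = 0 then (1+s)/4
      else if (a:ℕ) = 1 ∧ (b:ℕ) = 1 then (3-s)/4 else 0 := by
  unfold padM
  simp only [Matrix.of_apply]
  by_cases ha : (a:ℕ) < 2
  · by_cases hb : (b:ℕ) < 2
    · rw [dif_pos ha, dif_pos hb, Pmat_apply]
      have ha' : (a:ℕ) = 0 ∨ (a:ℕ) = 1 := by omega
      have hb' : (b:ℕ) = 0 ∨ (b:ℕ) = 1 := by omega
      rcases ha' with h1 | h1 <;> rcases hb' with h2 | h2 <;> simp [h1, h2]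
    · rw [dif_pos ha, dif_neg hb]
      have h1 : ¬ ((b:ℕ) = 0) := by omega
      have h2 : ¬ ((b:ℕ) = 1) := by omega
      simp [h1, h2]
  · rw [dif_neg ha]
    have h1 : ¬ ((a:ℕ) = 0) := by omega
    have h2 : ¬ ((a:ℕ) = 1) := by omega
    simp [h1, h2]

noncomputable def BB (L : ℕ) : ℝ := (L:ℝ)^L
noncomputable def xup (L : ℕ) : ℝ := 4 * (L:ℝ) * (BB L)^2

abbrev Xt (L : ℕ) := ℝ × (ℕ → Mx L) × (ℕ → Mx L)

def id0 {L : ℕ} (h : 2 ≤ L) : Fin L := ⟨0, by omega⟩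
def id1 {L : ℕ} (h : 2 ≤ L) : Fin L := ⟨1, by omega⟩

noncomputable def gmap {L : ℕ} (q : ℕ) (h : 2 ≤ L) (w : Xt L) : ℝ :=
  4 * ((w.2.2 (q-1) * w.2.1 (q-1)) (id1 h) (id0 h)) - 1

def Kset (L q : ℕ) (h : 2 ≤ L) : Set (Xt L) :=
  {w | w.1 ∈ Set.Icc (xup L)⁻¹ (xup L)
    ∧ (∀ i a c, w.2.1 i a c ∈ Set.Icc 0 (BB L) ∧ w.2.2 i a c ∈ Set.Icc 0 (BB L))
    ∧ (w.2.1 0 * w.2.2 0) (id0 h) (id0 h) = 3/4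
    ∧ 4 * (w.2.1 0 * w.2.2 0) (id0 h) (id1 h) = w.1
    ∧ (∀ a c : Fin L, 2 ≤ (a:ℕ) ∨ 2 ≤ (c:ℕ) → (w.2.1 0 * w.2.2 0) a c = 0)
    ∧ (∀ i, w.2.2 i * w.2.1 i = w.2.1 (i+1) * w.2.2 (i+1))
    ∧ w.2.2 (q-1) * w.2.1 (q-1) = padM L (Pmat (gmap q h w))}

lemma contU {L : ℕ} (i : ℕ) (a c : Fin L) : Continuous fun w : Xt L => w.2.1 i a c :=
  (continuous_apply c).comp ((continuous_apply a).comp ((continuous_apply i).comp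
    (continuous_fst.comp continuous_snd)))

lemma contV {L : ℕ} (i : ℕ) (a c : Fin L) : Continuous fun w : Xt L => w.2.2 i a c :=
  (continuous_apply c).comp ((continuous_apply a).comp ((continuous_apply i).comp
    (continuous_snd.comp continuous_snd)))

lemma contUmat {L : ℕ} (i : ℕ) : Continuous fun w : Xt L => w.2.1 i :=
  (continuous_apply i).comp (continuous_fst.comp continuous_snd)

lemma contVmat {L : ℕ} (i : ℕ) : Continuous fun w : Xt L => w.2.2 i :=
  (continuous_apply i).comp (continuous_snd.comp continuous_snd)

lemma contMulEntryUV {L : ℕ} (i j : ℕ) (a c : Fin L) :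
    Continuous fun w : Xt L => (w.2.1 i * w.2.2 j) a c := by
  have he : (fun w : Xt L => (w.2.1 i * w.2.2 j) a c)
      = fun w => ∑ k : Fin L, w.2.1 i a k * w.2.2 j k c := by
    funext w; exact Matrix.mul_apply
  rw [he]
  exact continuous_finset_sum _ fun k _ => (contU i a k).mul (contV j k c)

lemma contMulEntryVU {L : ℕ} (i j : ℕ) (a c : Fin L) :
    Continuous fun w : Xt L => (w.2.2 i * w.2.1 j) a c := by
  have he : (fun w : Xt L => (w.2.2 i * w.2.1 j) a c)
      = fun w => ∑ k : Fin L, w.2.2 i a k * w.2.1 j k c := by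
    funext w; exact Matrix.mul_apply
  rw [he]
  exact continuous_finset_sum _ fun k _ => (contV i a k).mul (contU j k c)

lemma contGmap {L q : ℕ} (h : 2 ≤ L) : Continuous (gmap (L := L) q h) := by
  unfold gmap
  exact (continuous_const.mul (contMulEntryVU (q-1) (q-1) (id1 h) (id0 h))).sub continuous_const

lemma contPadP {L q : ℕ} (h : 2 ≤ L) :
    Continuous fun w : Xt L => padM L (Pmat (gmap q h w)) := by
  apply continuous_matrix
  intro a c
  have he : (fun w : Xt L => padM L (Pmat (gmap q h w)) a c)
      = fun w => if (a:ℕ) = 0 ∧ (c:ℕ) = 0 then (3 + gmap q h w)/4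
        else if (a:ℕ) = 0 ∧ (c:ℕ) = 1 then (1 - gmap q h w)/4
        else if (a:ℕ) = 1 ∧ (c:ℕ) = 0 then (1 + gmap q h w)/4
        else if (a:ℕ) = 1 ∧ (c:ℕ) = 1 then (3 - gmap q h w)/4 else 0 := by
    funext w; rw [padP_apply]
  rw [he]
  by_cases h1 : (a:ℕ) = 0 ∧ (c:ℕ) = 0
  · simp only [h1, if_true]
    exact (continuous_const.add (contGmap h)).div_const 4
  · simp only [h1, if_false]
    by_cases h2 : (a:ℕ) = 0 ∧ (c:ℕ) = 1
    · simp only [h2, if_true]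
      exact (continuous_const.sub (contGmap h)).div_const 4
    · simp only [h2, if_false]
      by_cases h3 : (a:ℕ) = 1 ∧ (c:ℕ) = 0
      · simp only [h3, if_true]
        exact (continuous_const.add (contGmap h)).div_const 4
      · simp only [h3, if_false]
        by_cases h4 : (a:ℕ) = 1 ∧ (c:ℕ) = 1
        · simp only [h4, if_true]
          exact (continuous_const.sub (contGmap h)).div_const 4
        · simp only [h4, if_false]
          exact continuous_const

lemma isClosed_K {L q : ℕ} (h : 2 ≤ L) : IsClosed (Kset L q h) := by
  have hK : Kset L q h = {w : Xt L | w.1 ∈ Set.Icc (xup L)⁻¹ (xup L)}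
      ∩ ({w : Xt L | ∀ i a c, w.2.1 i a c ∈ Set.Icc 0 (BB L) ∧ w.2.2 i a c ∈ Set.Icc 0 (BB L)}
      ∩ ({w : Xt L | (w.2.1 0 * w.2.2 0) (id0 h) (id0 h) = 3/4}
      ∩ ({w : Xt L | 4 * (w.2.1 0 * w.2.2 0) (id0 h) (id1 h) = w.1}
      ∩ ({w : Xt L | ∀ a c : Fin L, 2 ≤ (a:ℕ) ∨ 2 ≤ (c:ℕ) → (w.2.1 0 * w.2.2 0) a c = 0}
      ∩ ({w : Xt L | ∀ i, w.2.2 i * w.2.1 i = w.2.1 (i+1) * w.2.2 (i+1)}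
      ∩ {w : Xt L | w.2.2 (q-1) * w.2.1 (q-1) = padM L (Pmat (gmap q h w))}))))) := rfl
  rw [hK]
  refine IsClosed.inter (isClosed_Icc.preimage continuous_fst) ?_
  refine IsClosed.inter ?_ ?_
  · have : {w : Xt L | ∀ i a c, w.2.1 i a c ∈ Set.Icc 0 (BB L) ∧ w.2.2 i a c ∈ Set.Icc 0 (BB L)}
        = ⋂ i, ⋂ a, ⋂ c, ({w : Xt L | w.2.1 i a c ∈ Set.Icc 0 (BB L)}
          ∩ {w : Xt L | w.2.2 i a c ∈ Set.Icc 0 (BB L)}) := by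
      ext w
      simp only [Set.mem_iInter, Set.mem_setOf_eq, Set.mem_inter_iff]
    rw [this]
    exact isClosed_iInter fun i => isClosed_iInter fun a => isClosed_iInter fun c =>
      (isClosed_Icc.preimage (contU i a c)).inter (isClosed_Icc.preimage (contV i a c))
  refine IsClosed.inter (isClosed_eq (contMulEntryUV 0 0 _ _) continuous_const) ?_
  refine IsClosed.inter (isClosed_eq (continuous_const.mul (contMulEntryUV 0 0 _ _))
    continuous_fst) ?_
  refine IsClosed.inter ?_ ?_
  · have : {w : Xt L | ∀ a c : Fin L, 2 ≤ (a:ℕ) ∨ 2 ≤ (c:ℕ) → (w.2.1 0 * w.2.2 0) a c = 0}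
        = ⋂ a : Fin L, ⋂ c : Fin L,
          {w : Xt L | 2 ≤ (a:ℕ) ∨ 2 ≤ (c:ℕ) → (w.2.1 0 * w.2.2 0) a c = 0} := by
      ext w
      simp only [Set.mem_iInter, Set.mem_setOf_eq]
    rw [this]
    refine isClosed_iInter fun a => isClosed_iInter fun c => ?_
    by_cases hcond : 2 ≤ (a:ℕ) ∨ 2 ≤ (c:ℕ)
    · have : {w : Xt L | 2 ≤ (a:ℕ) ∨ 2 ≤ (c:ℕ) → (w.2.1 0 * w.2.2 0) a c = 0}
          = {w : Xt L | (w.2.1 0 * w.2.2 0) a c = 0} := by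
        ext w; simp [hcond]
      rw [this]
      exact isClosed_eq (contMulEntryUV 0 0 a c) continuous_const
    · have : {w : Xt L | 2 ≤ (a:ℕ) ∨ 2 ≤ (c:ℕ) → (w.2.1 0 * w.2.2 0) a c = 0}
          = Set.univ := by
        ext w; simp [hcond]
      rw [this]
      exact isClosed_univ
  refine IsClosed.inter ?_ ?_
  · have : {w : Xt L | ∀ i, w.2.2 i * w.2.1 i = w.2.1 (i+1) * w.2.2 (i+1)}
        = ⋂ i, {w : Xt L | w.2.2 i * w.2.1 i = w.2.1 (i+1) * w.2.2 (i+1)} := by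
      ext w; simp only [Set.mem_iInter, Set.mem_setOf_eq]
    rw [this]
    exact isClosed_iInter fun i => isClosed_eq ((contVmat i).matrix_mul (contUmat i))
      ((contUmat (i+1)).matrix_mul (contVmat (i+1)))
  · exact isClosed_eq ((contVmat (q-1)).matrix_mul (contUmat (q-1))) (contPadP h)

def MB (L : ℕ) : Set (Mx L) := {m | ∀ a c, m a c ∈ Set.Icc (0:ℝ) (BB L)}

lemma isCompact_MB {L : ℕ} : IsCompact (MB L) := by
  have : MB L = (Set.pi Set.univ fun _ : Fin L => Set.pi Set.univ fun _ : Fin L =>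
      Set.Icc (0:ℝ) (BB L)) := by
    ext m
    simp only [MB, Set.mem_setOf_eq, Set.pi_univ_Icc, Set.mem_Icc, Pi.le_def]
    constructor
    · intro hm; exact ⟨fun a c => (hm a c).1, fun a c => (hm a c).2⟩
    · intro hm a c; exact ⟨hm.1 a c, hm.2 a c⟩
  rw [this]
  exact isCompact_univ_pi fun _ => isCompact_univ_pi fun _ => isCompact_Icc

lemma isCompact_K {L q : ℕ} (h : 2 ≤ L) : IsCompact (Kset L q h) := by
  have hbig : IsCompact ((Set.Icc (xup L)⁻¹ (xup L)) ×ˢ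
      ((Set.pi Set.univ fun _ : ℕ => MB L) ×ˢ (Set.pi Set.univ fun _ : ℕ => MB L))) :=
    isCompact_Icc.prod ((isCompact_univ_pi fun _ => isCompact_MB).prod
      (isCompact_univ_pi fun _ => isCompact_MB))
  refine hbig.of_isClosed_subset (isClosed_K h) ?_
  intro w hw
  obtain ⟨h1, h2, _⟩ := hw
  refine ⟨h1, ?_, ?_⟩
  · exact fun i _ a c => (h2 i a c).1
  · exact fun i _ a c => (h2 i a c).2
lemma trans_half {L : ℕ} (U V : Mx L) (hU : ∀ a b, 0 ≤ U a b) (v : Fin L → ℝ)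
    (hv : ∀ a, 0 ≤ v a) (hv0 : v ≠ 0) (heig : (V * U) *ᵥ v = (1/2 : ℝ) • v) :
    ∃ u : Fin L → ℝ, (∀ a, 0 ≤ u a) ∧ u ≠ 0 ∧ (U * V) *ᵥ u = (1/2 : ℝ) • u := by
  refine ⟨U *ᵥ v, ?_, ?_, ?_⟩
  · intro a
    have hrfl : (U *ᵥ v) a = ∑ c, U a c * v c := rfl
    rw [hrfl]
    exact Finset.sum_nonneg fun c _ => mul_nonneg (hU a c) (hv c)
  · intro h0
    apply hv0
    have h2 : V *ᵥ (U *ᵥ v) = (1/2 : ℝ) • v := by rw [Matrix.mulVec_mulVec, heig]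
    rw [h0, Matrix.mulVec_zero] at h2
    rcases smul_eq_zero.mp h2.symm with h4 | h4
    · norm_num at h4
    · exact h4
  · have h5 : V *ᵥ (U *ᵥ v) = (V * U) *ᵥ v := Matrix.mulVec_mulVec _ _ _
    have h6 : (U * V) *ᵥ (U *ᵥ v) = U *ᵥ (V *ᵥ (U *ᵥ v)) := (Matrix.mulVec_mulVec _ _ _).symm
    rw [h6, h5, heig, Matrix.mulVec_smul]

lemma id0_ne_id1 {L : ℕ} (h : 2 ≤ L) : id0 h ≠ id1 h := by
  intro hcontra
  have := congrArg (fun x : Fin L => (x : ℕ)) hcontra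
  simp [id0, id1] at this

lemma padP1_eig {L : ℕ} (h : 2 ≤ L) :
    padM L (Pmat 1) *ᵥ (fun b => if b = id1 h then (1:ℝ) else 0)
      = (1/2 : ℝ) • (fun b => if b = id1 h then (1:ℝ) else 0) := by
  funext a
  have hL : (padM L (Pmat 1) *ᵥ fun b => if b = id1 h then (1:ℝ) else 0) a
      = ∑ b, padM L (Pmat 1) a b * (if b = id1 h then (1:ℝ) else 0) := rfl
  have hR : ((1/2 : ℝ) • fun b => if b = id1 h then (1:ℝ) else 0) a
      = (1/2 : ℝ) * (if a = id1 h then (1:ℝ) else 0) := rfl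
  rw [hL, hR, Finset.sum_eq_single (id1 h)]
  · rw [if_pos rfl, mul_one, padP_apply]
    have hid1 : ((id1 h : Fin L) : ℕ) = 1 := rfl
    rw [hid1]
    by_cases ha0 : (a:ℕ) = 0
    · have hne : a ≠ id1 h := by
        intro hcontra; rw [hcontra] at ha0; exact absurd ha0 (by simp [id1])
      rw [if_neg hne]
      simp [ha0]
    · by_cases ha1 : (a:ℕ) = 1
      · have heq : a = id1 h := by
          apply Fin.ext; rw [ha1]; rfl
        rw [if_pos heq]
        simp [ha0, ha1]
        norm_num
      · have hne : a ≠ id1 h := by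
          intro hcontra; rw [hcontra] at ha1; exact absurd rfl ha1
        rw [if_neg hne]
        simp [ha0, ha1]
  · intro b _ hb
    rw [if_neg hb, mul_zero]
  · intro hmem
    exact absurd (Finset.mem_univ _) hmem

lemma one_notin_image {L q : ℕ} (h2 : 2 ≤ L) (hq : 1 ≤ q) :
    (1:ℝ) ∉ gmap (L := L) q h2 '' Kset L q h2 := by
  rintro ⟨w, hw, hg1⟩
  obtain ⟨hx, hbd, he00, he01, hzero, hcoh, hlastP⟩ := hw
  rw [hg1] at hlastP
  have main : ∀ j : ℕ, j ≤ q - 1 → ∃ v : Fin L → ℝ, (∀ a, 0 ≤ v a) ∧ v ≠ 0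
      ∧ (w.2.1 (q-1-j) * w.2.2 (q-1-j)) *ᵥ v = (1/2 : ℝ) • v := by
    intro j
    induction j with
    | zero =>
        intro _
        have he : (w.2.2 (q-1) * w.2.1 (q-1)) *ᵥ (fun b => if b = id1 h2 then (1:ℝ) else 0)
            = (1/2 : ℝ) • (fun b => if b = id1 h2 then (1:ℝ) else 0) := by
          rw [hlastP]; exact padP1_eig h2
        have hv0 : (fun b : Fin L => if b = id1 h2 then (1:ℝ) else 0) ≠ 0 := by
          intro hcontra
          have := congrFun hcontra (id1 h2)
          simp at this
        have hvnn : ∀ a : Fin L, 0 ≤ (if a = id1 h2 then (1:ℝ) else 0) := by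
          intro a; split <;> norm_num
        obtain ⟨u, hu1, hu2, hu3⟩ := trans_half (w.2.1 (q-1)) (w.2.2 (q-1))
          (fun a b => (hbd (q-1) a b).1.1) _ hvnn hv0 he
        refine ⟨u, hu1, hu2, ?_⟩
        simpa using hu3
    | succ j ih =>
        intro hj1
        obtain ⟨v, hv1, hv2, hv3⟩ := ih (by omega)
        have hip1 : q - 1 - (j+1) + 1 = q - 1 - j := by omega
        have hcoh' := hcoh (q - 1 - (j+1))
        rw [hip1] at hcoh'
        have he : (w.2.2 (q-1-(j+1)) * w.2.1 (q-1-(j+1))) *ᵥ v = (1/2 : ℝ) • v := by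
          rw [hcoh']; exact hv3
        obtain ⟨u, hu1, hu2, hu3⟩ := trans_half (w.2.1 (q-1-(j+1))) (w.2.2 (q-1-(j+1)))
          (fun a b => (hbd (q-1-(j+1)) a b).1.1) v hv1 hv2 he
        exact ⟨u, hu1, hu2, hu3⟩
  obtain ⟨v, hv1, hv2, hv3⟩ := main (q-1) le_rfl
  rw [Nat.sub_self] at hv3
  -- positivity of w.1
  have hxuppos : 0 < xup L := by
    unfold xup BB
    have hL0 : (0:ℝ) < (L:ℝ) := by exact_mod_cast (by omega : 0 < L)
    positivity
  have hwpos : 0 < w.1 := lt_of_lt_of_le (inv_pos.2 hxuppos) hx.1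
  -- row id0
  have hrow0 := congrFun hv3 (id0 h2)
  have hsum0 : ((w.2.1 0 * w.2.2 0) *ᵥ v) (id0 h2)
      = ∑ b, (w.2.1 0 * w.2.2 0) (id0 h2) b * v b := rfl
  have hsplit : ∑ b, (w.2.1 0 * w.2.2 0) (id0 h2) b * v b
      = (w.2.1 0 * w.2.2 0) (id0 h2) (id0 h2) * v (id0 h2)
        + (w.2.1 0 * w.2.2 0) (id0 h2) (id1 h2) * v (id1 h2) := by
    have hpair : ∑ b ∈ ({id0 h2, id1 h2} : Finset (Fin L)), (w.2.1 0 * w.2.2 0) (id0 h2) b * v b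
        = (w.2.1 0 * w.2.2 0) (id0 h2) (id0 h2) * v (id0 h2)
          + (w.2.1 0 * w.2.2 0) (id0 h2) (id1 h2) * v (id1 h2) :=
      Finset.sum_pair (id0_ne_id1 h2)
    rw [← hpair]
    refine (Finset.sum_subset (Finset.subset_univ _) ?_).symm
    intro b _ hb
    simp only [Finset.mem_insert, Finset.mem_singleton] at hb
    push_neg at hb
    have hb2 : 2 ≤ (b:ℕ) := by
      rcases hb with ⟨hb0, hb1⟩
      have h0 : (b:ℕ) ≠ 0 := fun hc => hb0 (Fin.ext (by rw [hc]; rfl))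
      have h1 : (b:ℕ) ≠ 1 := fun hc => hb1 (Fin.ext (by rw [hc]; rfl))
      omega
    rw [hzero (id0 h2) b (Or.inr hb2), zero_mul]
  have he01' : (w.2.1 0 * w.2.2 0) (id0 h2) (id1 h2) = w.1 / 4 := by linarith
  have hrowid0 : (3/4) * v (id0 h2) + (w.1/4) * v (id1 h2) = (1/2) * v (id0 h2) := by
    have := hrow0
    rw [hsum0, hsplit, he00, he01'] at this
    have hR : ((1/2 : ℝ) • v) (id0 h2) = (1/2) * v (id0 h2) := rfl
    rw [hR] at this
    linarith
  have hv00 : v (id0 h2) = 0 ∧ v (id1 h2) = 0 := by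
    have h1 := hv1 (id0 h2)
    have h2' := hv1 (id1 h2)
    have hsum00 : (1/4) * v (id0 h2) + (w.1/4) * v (id1 h2) = 0 := by linarith
    have hterm1 : 0 ≤ (w.1/4) * v (id1 h2) := mul_nonneg (by linarith) h2'
    have hva : v (id0 h2) = 0 := by linarith
    have hvb : (w.1/4) * v (id1 h2) = 0 := by linarith
    have hvc : v (id1 h2) = 0 := by
      rcases mul_eq_zero.mp hvb with hcase | hcase
      · exfalso; linarith
      · exact hcase
    exact ⟨hva, hvc⟩
  have hvall : v = 0 := by
    funext a
    show v a = (0:ℝ)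
    by_cases ha0 : (a:ℕ) = 0
    · have : a = id0 h2 := Fin.ext (by rw [ha0]; rfl)
      rw [this]; exact hv00.1
    · by_cases ha1 : (a:ℕ) = 1
      · have : a = id1 h2 := Fin.ext (by rw [ha1]; rfl)
        rw [this]; exact hv00.2
      · have ha2 : 2 ≤ (a:ℕ) := by omega
        have hrowa := congrFun hv3 a
        have hsuma : ((w.2.1 0 * w.2.2 0) *ᵥ v) a = ∑ b, (w.2.1 0 * w.2.2 0) a b * v b := rfl
        have hz : ∑ b, (w.2.1 0 * w.2.2 0) a b * v b = 0 := by
          refine Finset.sum_eq_zero fun b _ => ?_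
          rw [hzero a b (Or.inl ha2), zero_mul]
        rw [hsuma, hz] at hrowa
        have hR : ((1/2 : ℝ) • v) a = (1/2) * v a := rfl
        rw [hR] at hrowa
        linarith
  exact hv2 hvall
lemma padPt_mem {L : ℕ} {t : ℝ} (ht0 : 0 ≤ t) (ht1 : t ≤ 1) (a c : Fin L) :
    padM L (Pmat t) a c ∈ Set.Icc (0:ℝ) 1 := by
  rw [Set.mem_Icc, padP_apply]
  constructor <;> split_ifs <;> linarith

lemma conj_cancel {d v : ℝ} (hd : d ≠ 0) : d * v * d⁻¹ = v := by
  field_simp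

lemma construct {L : ℕ} (h2 : 2 ≤ L) {t : ℝ} (ht0 : 0 ≤ t) (ht1 : t ≤ 1)
    {p : ℕ} (hp : p < L) (q : ℕ) (hq : q = L - 1)
    (hsse : SSEls {x : ℝ | 0 ≤ x} L (Pmat 0) (Pmat t) p) :
    t ∈ gmap (L := L) q h2 '' Kset L q h2 := by
  have hL0 : 0 < L := by omega
  have hL1 : (1:ℝ) ≤ (L:ℝ) := by exact_mod_cast (by omega : 1 ≤ L)
  obtain ⟨hPC, -, -⟩ := sse_to_pchain hsse
  have hbd1 : ∀ a b : Fin L, cj (fun _ => (1:ℝ)) (padM L (Pmat t)) a b ≤ 1 := by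
    intro a b; rw [cj_one]; exact (padPt_mem ht0 ht1 a b).2
  obtain ⟨D, hD, hNC⟩ := pchain_normalize hL0 p _ _ hPC (fun _ => 1) (fun _ => one_pos) 1
    le_rfl hbd1
  rw [cj_one] at hNC
  have hble : (L:ℝ)^p * 1 ≤ BB L := by
    rw [mul_one]; unfold BB
    exact pow_le_pow_right₀ hL1 hp.le
  have hNC' := NChain_mono hble hNC
  have hBB1 : (1:ℝ) ≤ BB L := by unfold BB; exact one_le_pow₀ hL1
  have hBend : ∀ a c : Fin L, padM L (Pmat t) a c ∈ Set.Icc 0 (BB L) := fun a c =>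
    ⟨(padPt_mem ht0 ht1 a c).1, le_trans (padPt_mem ht0 ht1 a c).2 hBB1⟩
  obtain ⟨U, V, hbds, hU0V0, hcoh, hlast⟩ := nchain_fun_ext hBB1 p _ _ hNC' hBend
  set x : ℝ := D (id0 h2) * (D (id1 h2))⁻¹ with hxdef
  have hxpos : 0 < x := mul_pos (hD _) (inv_pos.2 (hD _))
  have hcj : ∀ a c : Fin L, (U 0 * V 0) a c = D a * padM L (Pmat 0) a c * (D c)⁻¹ := by
    intro a c; rw [hU0V0, cj_apply]
  have hid0v : ((id0 h2 : Fin L) : ℕ) = 0 := rfl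
  have hid1v : ((id1 h2 : Fin L) : ℕ) = 1 := rfl
  have he00 : (U 0 * V 0) (id0 h2) (id0 h2) = 3/4 := by
    rw [hcj, padP_apply]
    simp only [hid0v, hid1v]
    norm_num [conj_cancel (hD (id0 h2)).ne']
  have he01 : 4 * (U 0 * V 0) (id0 h2) (id1 h2) = x := by
    rw [hcj, padP_apply]
    simp only [hid0v, hid1v]
    norm_num
    rw [hxdef]
    ring
  have he10 : (U 0 * V 0) (id1 h2) (id0 h2) = (1/4) * x⁻¹ := by
    rw [hcj, padP_apply]
    simp only [hid0v, hid1v]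
    norm_num
    rw [hxdef, mul_inv, inv_inv]
    ring
  have hzero : ∀ a c : Fin L, 2 ≤ (a:ℕ) ∨ 2 ≤ (c:ℕ) → (U 0 * V 0) a c = 0 := by
    intro a c hac
    rw [hcj, padP_apply]
    have h1 : ¬((a:ℕ) = 0 ∧ (c:ℕ) = 0) := by omega
    have h2' : ¬((a:ℕ) = 0 ∧ (c:ℕ) = 1) := by omega
    have h3' : ¬((a:ℕ) = 1 ∧ (c:ℕ) = 0) := by omega
    have h4' : ¬((a:ℕ) = 1 ∧ (c:ℕ) = 1) := by omega
    rw [if_neg h1, if_neg h2', if_neg h3', if_neg h4']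
    ring
  have hBB0 : (0:ℝ) < BB L := lt_of_lt_of_le one_pos hBB1
  have hxuppos : 0 < xup L := by
    unfold xup
    have hL0' : (0:ℝ) < (L:ℝ) := by exact_mod_cast hL0
    positivity
  have hentry_bound : ∀ a c : Fin L, (U 0 * V 0) a c ≤ (L:ℝ) * (BB L)^2 := by
    intro a c
    have hmm : (U 0 * V 0) a c = ∑ k, U 0 a k * V 0 k c := Matrix.mul_apply
    rw [hmm]
    calc ∑ k, U 0 a k * V 0 k c ≤ ∑ _k : Fin L, BB L * BB L := by
          refine Finset.sum_le_sum fun k _ => ?_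
          exact mul_le_mul (hbds 0 a k).1.2 (hbds 0 k c).2.2 (hbds 0 k c).2.1 hBB0.le
      _ = (L:ℝ) * (BB L)^2 := by
          rw [Finset.sum_const, Finset.card_univ, Fintype.card_fin, nsmul_eq_mul]
          ring
  have hxle : x ≤ xup L := by
    rw [← he01]
    unfold xup
    have := hentry_bound (id0 h2) (id1 h2)
    linarith
  have hinvle : x⁻¹ ≤ xup L := by
    have hb := hentry_bound (id1 h2) (id0 h2)
    rw [he10] at hb
    unfold xup
    linarith
  have hxge : (xup L)⁻¹ ≤ x := by
    have h1x : 1 ≤ x * xup L := by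
      have h0 : x⁻¹ * x = 1 := inv_mul_cancel₀ hxpos.ne'
      nlinarith [mul_le_mul_of_nonneg_right hinvle hxpos.le]
    calc (xup L)⁻¹ = (xup L)⁻¹ * 1 := by ring
      _ ≤ (xup L)⁻¹ * (x * xup L) := by
          exact mul_le_mul_of_nonneg_left h1x (inv_nonneg.2 hxuppos.le)
      _ = x := by field_simp
  have hq1 : q - 1 + 1 = q := by omega
  have hlastq : V (q-1) * U (q-1) = padM L (Pmat t) := by
    refine hlast (q-1) ?_
    omega
  have hpadentry : padM L (Pmat t) (id1 h2) (id0 h2) = (1+t)/4 := by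
    rw [padP_apply]
    simp only [hid0v, hid1v]
    norm_num
  have hgm : gmap q h2 ((x, U, V) : Xt L) = t := by
    show 4 * ((V (q-1) * U (q-1)) (id1 h2) (id0 h2)) - 1 = t
    rw [hlastq, hpadentry]
    ring
  refine ⟨((x, U, V) : Xt L), ⟨⟨hxge, hxle⟩, hbds, he00, he01, hzero, hcoh, ?_⟩, hgm⟩
  show V (q-1) * U (q-1) = padM L (Pmat (gmap q h2 ((x, U, V) : Xt L)))
  rw [hgm]
  exact hlastq

end S16

/-- For every integer `L ≥ 2` there exists `t ∈ (0, 1)` such that there is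
no strong shift equivalence over `ℝ₊` between `P_0` and `P_t` of lag less than `L` in which
every matrix of the chain has size less than `L`. -/
theorem stmt16 (L : ℕ) (hL : 2 ≤ L) :
    ∃ t : ℝ, 0 < t ∧ t < 1 ∧
      ¬ ∃ p : ℕ, p < L ∧ SSEls {x : ℝ | 0 ≤ x} L (Pmat 0) (Pmat t) p := by
  by_cases h3 : 3 ≤ L
  · set q := L - 1 with hqdef
    have h2 : 2 ≤ L := hL
    have hq1 : 1 ≤ q := by omega
    have hTclosed : IsClosed (S16.gmap (L := L) q h2 '' S16.Kset L q h2) :=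
      ((S16.isCompact_K h2).image (S16.contGmap h2)).isClosed
    have h1T := S16.one_notin_image h2 hq1
    have hopen : IsOpen (S16.gmap (L := L) q h2 '' S16.Kset L q h2)ᶜ := hTclosed.isOpen_compl
    obtain ⟨ε, hε, hball⟩ := Metric.isOpen_iff.mp hopen 1 h1T
    have htmin_pos : 0 < min (ε/2) (1/2 : ℝ) := lt_min (by linarith) (by norm_num)
    have htmin_le : min (ε/2) (1/2 : ℝ) ≤ 1/2 := min_le_right _ _
    refine ⟨1 - min (ε/2) (1/2), by linarith, by linarith, ?_⟩
    rintro ⟨p, hp, hsse⟩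
    have hmem := S16.construct h2 (by linarith) (by linarith) hp q hqdef hsse
    have htball : (1 - min (ε/2) (1/2 : ℝ)) ∈ Metric.ball (1:ℝ) ε := by
      rw [Metric.mem_ball, Real.dist_eq]
      have habs : |(1 - min (ε/2) (1/2 : ℝ)) - 1| = min (ε/2) (1/2) := by
        rw [abs_of_nonpos (by linarith)]
        ring
      rw [habs]
      calc min (ε/2) (1/2 : ℝ) ≤ ε/2 := min_le_left _ _
        _ < ε := by linarith
    exact hball htball hmem
  · have hL2 : L = 2 := by omega
    subst hL2
    refine ⟨1/2, by norm_num, by norm_num, ?_⟩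
    rintro ⟨p, hp, hsse⟩
    have := (S16.sse_to_pchain hsse).2.1
    omega
end

section
/- Let A be an m×m and B an n×n irreducible nonnegative real matrix, let λ > 0, and let v ∈ ℝ^m and w ∈ ℝ^n be positive (right) eigenvectors with Av = λv and Bw = λw. Write D = diag(v), E = diag(w), and let 𝒮(A) = (1/λ)D⁻¹AD and 𝒮(B) = (1/λ)E⁻¹BE denote the stochasticizations. If there exist nonnegative real matrices X (m×n) and Y (n×m) with A = XY and B = YX, then there exist generalized row stochastic matrices R (m×n) and S (n×m) — i.e., nonnegative matrices each of whose row sums equals 1 — such that 𝒮(A) = RS and 𝒮(B) = SR. In particular 𝒮(A) and 𝒮(B) are elementary strong shift equivalent over ℝ₊. -/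
open Matrix BigOperators

/-- Let `A` (m×m) and `B` (n×n) be irreducible nonnegative real matrices,
`λ > 0`, and `v`, `w` positive right eigenvectors of `A`, `B` for `λ`. If `A = XY` and
`B = YX` with `X`, `Y` nonnegative, then there are generalized row stochastic matrices `R`, `S`
with `𝒮(A) = RS` and `𝒮(B) = SR`, where `𝒮(A) = (1/λ)·D⁻¹AD`, `D = diag(v)`, and
`𝒮(B) = (1/λ)·E⁻¹BE`, `E = diag(w)`. In particular `𝒮(A)` and `𝒮(B)` are elementary strong
shift equivalent over `ℝ₊`. -/
theorem stmt17 {m n : ℕ}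
    (A : Matrix (Fin m) (Fin m) ℝ) (B : Matrix (Fin n) (Fin n) ℝ)
    (hAnn : ∀ i j, 0 ≤ A i j) (hAirr : ∀ i j, ∃ k : ℕ, 0 < (A ^ k) i j)
    (hBnn : ∀ i j, 0 ≤ B i j) (hBirr : ∀ i j, ∃ k : ℕ, 0 < (B ^ k) i j)
    (lam : ℝ) (hlam : 0 < lam)
    (v : Fin m → ℝ) (hv : ∀ i, 0 < v i) (hAv : A.mulVec v = lam • v)
    (w : Fin n → ℝ) (hw : ∀ i, 0 < w i) (hBw : B.mulVec w = lam • w)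
    (X : Matrix (Fin m) (Fin n) ℝ) (Y : Matrix (Fin n) (Fin m) ℝ)
    (hXnn : ∀ i j, 0 ≤ X i j) (hYnn : ∀ i j, 0 ≤ Y i j)
    (hA : A = X * Y) (hB : B = Y * X) :
    ∃ (R : Matrix (Fin m) (Fin n) ℝ) (S : Matrix (Fin n) (Fin m) ℝ),
      (∀ i j, 0 ≤ R i j) ∧ (∀ i, ∑ j, R i j = 1) ∧
      (∀ i j, 0 ≤ S i j) ∧ (∀ i, ∑ j, S i j = 1) ∧
      lam⁻¹ • ((Matrix.diagonal v)⁻¹ * A * Matrix.diagonal v) = R * S ∧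
      lam⁻¹ • ((Matrix.diagonal w)⁻¹ * B * Matrix.diagonal w) = S * R := by
  -- degenerate cases
  rcases Nat.eq_zero_or_pos m with hm | hm
  · subst hm
    rcases Nat.eq_zero_or_pos n with hn | hn
    · subst hn
      refine ⟨0, 0, ?_, ?_, ?_, ?_, ?_, ?_⟩ <;>
        first
          | (intro i; exact i.elim0)
          | (ext i j; exact i.elim0)
    · exfalso
      have hB0 : B = 0 := by
        subst hB; ext i j; rw [Matrix.mul_apply]; simp
      have := congrFun hBw ⟨0, hn⟩
      rw [hB0] at this
      simp [Matrix.mulVec] at this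
      rcases this with h | h
      · exact hlam.ne' h
      · exact (hw ⟨0, hn⟩).ne' h
  rcases Nat.eq_zero_or_pos n with hn | hn
  · exfalso
    subst hn
    have hA0 : A = 0 := by
      subst hA; ext i j; rw [Matrix.mul_apply]; simp
    have := congrFun hAv ⟨0, hm⟩
    rw [hA0] at this
    simp [Matrix.mulVec] at this
    rcases this with h | h
    · exact hlam.ne' h
    · exact (hv ⟨0, hm⟩).ne' h
  haveI : Nonempty (Fin m) := ⟨⟨0, hm⟩⟩
  haveI : Nonempty (Fin n) := ⟨⟨0, hn⟩⟩
  -- set u = Y v, an eigenvector of B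
  set u : Fin n → ℝ := Y.mulVec v with hu
  have hunn : ∀ j, 0 ≤ u j := fun j => by
    rw [hu, Matrix.mulVec, dotProduct]
    exact Finset.sum_nonneg fun i _ => mul_nonneg (hYnn j i) (hv i).le
  have hXYv : X.mulVec (Y.mulVec v) = lam • v := by
    rw [Matrix.mulVec_mulVec, ← hA, hAv]
  have hBu : B.mulVec u = lam • u := by
    rw [hu, hB, ← Matrix.mulVec_mulVec, hXYv, Matrix.mulVec_smul]
  -- powers of B are nonneg
  have hpow_nn : ∀ (k : ℕ) (i j : Fin n), 0 ≤ (B ^ k) i j := by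
    intro k
    induction k with
    | zero => intro i j; rw [pow_zero, Matrix.one_apply]; split <;> norm_num
    | succ k ih =>
      intro i j
      rw [pow_succ, Matrix.mul_apply]
      exact Finset.sum_nonneg fun l _ => mul_nonneg (ih i l) (hBnn l j)
  -- eigenvector for powers
  have hpow_eig : ∀ (z : Fin n → ℝ), B.mulVec z = lam • z →
      ∀ k : ℕ, (B ^ k).mulVec z = lam ^ k • z := by
    intro z hz k
    induction k with
    | zero => simp
    | succ k ih =>
      rw [pow_succ, ← Matrix.mulVec_mulVec, hz, Matrix.mulVec_smul, ih, smul_smul,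
        pow_succ, mul_comm lam (lam ^ k)]
  -- t = min of u j / w j
  obtain ⟨j0, hj0mem, hj0⟩ := Finset.exists_mem_eq_inf' (Finset.univ_nonempty (α := Fin n))
    (fun j => u j / w j)
  set t : ℝ := Finset.univ.inf' Finset.univ_nonempty (fun j => u j / w j) with ht
  have htle : ∀ j, t ≤ u j / w j := fun j => Finset.inf'_le _ (Finset.mem_univ j)
  have hzt : ∀ j, t * w j ≤ u j := fun j => by
    have := htle j
    rw [le_div_iff₀ (hw j)] at this
    linarith
  set z : Fin n → ℝ := fun j => u j - t * w j with hzdef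
  have hznn : ∀ j, 0 ≤ z j := fun j => by simp [hzdef]; exact hzt j
  have hzj0 : z j0 = 0 := by
    simp [hzdef]
    have h : t = u j0 / w j0 := hj0
    rw [h, div_mul_cancel₀ _ (hw j0).ne', sub_self]
  have hBz : B.mulVec z = lam • z := by
    have : z = u - t • w := by funext j; simp [hzdef]
    rw [this, Matrix.mulVec_sub, Matrix.mulVec_smul, hBu, hBw, smul_sub, smul_smul, smul_smul,
      mul_comm t lam]
  have hz0 : ∀ j, z j = 0 := by
    intro i
    by_contra hne
    have hzi : 0 < z i := lt_of_le_of_ne (hznn i) (Ne.symm hne)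
    obtain ⟨k, hk⟩ := hBirr j0 i
    have h1 : (B ^ k).mulVec z j0 = lam ^ k * z j0 := by
      rw [hpow_eig z hBz k]; rfl
    rw [hzj0, mul_zero] at h1
    have h2 : (B ^ k) j0 i * z i ≤ (B ^ k).mulVec z j0 := by
      rw [Matrix.mulVec, dotProduct]
      exact Finset.single_le_sum (fun l _ => mul_nonneg (hpow_nn k j0 l) (hznn l))
        (Finset.mem_univ i)
    rw [h1] at h2
    exact absurd h2 (not_le.mpr (mul_pos hk hzi))
  have huw : ∀ j, u j = t * w j := fun j => by
    have := hz0 j; simp [hzdef] at this; linarith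
  -- t > 0
  have htnn : 0 ≤ t := by
    rw [hj0]; exact div_nonneg (hunn j0) (hw j0).le
  have htpos : 0 < t := by
    rcases htnn.lt_or_eq with h | h
    · exact h
    · exfalso
      have hu0 : ∀ j, u j = 0 := fun j => by rw [huw j, ← h, zero_mul]
      have : A.mulVec v = 0 := by
        rw [hA, ← Matrix.mulVec_mulVec, ← hu]
        funext i
        rw [Matrix.mulVec, dotProduct]
        simp [hu0]
      rw [hAv] at this
      have := congrFun this ⟨0, hm⟩
      simp at this
      rcases this with h' | h'
      · exact hlam.ne' h'
      · exact (hv ⟨0, hm⟩).ne' h'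
  have hlam0 : lam ≠ 0 := hlam.ne'
  have ht0 : t ≠ 0 := htpos.ne'
  have hv0 : ∀ i, v i ≠ 0 := fun i => (hv i).ne'
  have hw0 : ∀ j, w j ≠ 0 := fun j => (hw j).ne'
  -- X w = (lam / t) v
  have hXw : ∀ i, ∑ j, X i j * w j = lam * v i / t := by
    intro i
    have h1 : A.mulVec v i = lam * v i := by rw [hAv]; rfl
    have h2 : A.mulVec v i = t * ∑ j, X i j * w j := by
      rw [hA, ← Matrix.mulVec_mulVec, ← hu]
      rw [Matrix.mulVec, dotProduct]
      rw [Finset.mul_sum]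
      exact Finset.sum_congr rfl fun j _ => by rw [huw j]; ring
    rw [h1] at h2
    field_simp
    linarith [h2]
  -- Yv row sums
  have hYv : ∀ j, ∑ i, Y j i * v i = t * w j := fun j => (huw j)
  -- diagonal inverses
  have hDinv : (Matrix.diagonal v)⁻¹ = Matrix.diagonal (fun i => (v i)⁻¹) := by
    apply Matrix.inv_eq_right_inv
    rw [Matrix.diagonal_mul_diagonal]
    have : (fun i => v i * (v i)⁻¹) = fun _ => (1 : ℝ) := by
      funext i; exact mul_inv_cancel₀ (hv0 i)
    rw [this, Matrix.diagonal_one]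
  have hEinv : (Matrix.diagonal w)⁻¹ = Matrix.diagonal (fun j => (w j)⁻¹) := by
    apply Matrix.inv_eq_right_inv
    rw [Matrix.diagonal_mul_diagonal]
    have : (fun j => w j * (w j)⁻¹) = fun _ => (1 : ℝ) := by
      funext j; exact mul_inv_cancel₀ (hw0 j)
    rw [this, Matrix.diagonal_one]
  set R : Matrix (Fin m) (Fin n) ℝ := Matrix.of fun i j => X i j * w j * t / (lam * v i)
    with hR
  set S : Matrix (Fin n) (Fin m) ℝ := Matrix.of fun j i => Y j i * v i / (t * w j) with hS
  have hRapp : ∀ i j, R i j = X i j * w j * t / (lam * v i) := fun _ _ => rfl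
  have hSapp : ∀ j i, S j i = Y j i * v i / (t * w j) := fun _ _ => rfl
  refine ⟨R, S, ?_, ?_, ?_, ?_, ?_, ?_⟩
  · intro i j
    rw [hRapp]
    apply div_nonneg
    · exact mul_nonneg (mul_nonneg (hXnn i j) (hw j).le) htpos.le
    · exact (mul_pos hlam (hv i)).le
  · intro i
    have h : ∀ j, R i j = (X i j * w j) * (t / (lam * v i)) := by
      intro j; rw [hRapp]; ring
    rw [Finset.sum_congr rfl fun j _ => h j, ← Finset.sum_mul, hXw i]
    rw [div_mul_div_comm, mul_comm (lam * v i) t, mul_div_mul_left _ _ ht0,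
      div_self (mul_ne_zero hlam0 (hv0 i))]
  · intro j i
    rw [hSapp]
    apply div_nonneg
    · exact mul_nonneg (hYnn j i) (hv i).le
    · exact (mul_pos htpos (hw j)).le
  · intro j
    have h : ∀ i, S j i = (Y j i * v i) * (t * w j)⁻¹ := by
      intro i; rw [hSapp]; ring
    rw [Finset.sum_congr rfl fun i _ => h i, ← Finset.sum_mul, hYv j]
    exact mul_inv_cancel₀ (mul_ne_zero ht0 (hw0 j))
  · ext i k
    rw [Matrix.smul_apply, hDinv, Matrix.mul_diagonal, Matrix.diagonal_mul, Matrix.mul_apply,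
      smul_eq_mul]
    have hAik : A i k = ∑ j, X i j * Y j k := by rw [hA, Matrix.mul_apply]
    have h : ∀ j, R i j * S j k = (lam⁻¹ * ((v i)⁻¹ * v k)) * (X i j * Y j k) := by
      intro j
      have h1 := hv0 i
      have h2 := hw0 j
      rw [hRapp, hSapp]
      field_simp
    rw [Finset.sum_congr rfl fun j _ => h j, ← Finset.mul_sum, ← hAik, hAik]
    rw [← hAik]
    ring
  · ext j l
    rw [Matrix.smul_apply, hEinv, Matrix.mul_diagonal, Matrix.diagonal_mul, Matrix.mul_apply,
      smul_eq_mul]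
    have hBjl : B j l = ∑ i, Y j i * X i l := by rw [hB, Matrix.mul_apply]
    have h : ∀ i, S j i * R i l = (lam⁻¹ * ((w j)⁻¹ * w l)) * (Y j i * X i l) := by
      intro i
      have h1 := hv0 i
      have h2 := hw0 j
      rw [hRapp, hSapp]
      field_simp
    rw [Finset.sum_congr rfl fun i _ => h i, ← Finset.mul_sum, ← hBjl]
    ring
end
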